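/- arXiv:1807.09189 — 7 statements merged into one kernel-verified Lean document; each statement's English description precedes it below -/
import Mathlib

section
/- Let N ≥ 1, λ > 0, and let μ be a probability measure on ℝ^N. Then for any a ∈ ℝ^N and r > 0, I_λ[μ] ≥ 2^{1−(λ−1)₊} μ(B_r(a)) ( ∫_{ℝ^N} |y−a|^λ dμ(y) − 2^{(λ−1)₊} r^λ ), where I_λ[μ] = ∬ |x−y|^λ dμ(x)dμ(y) and (λ−1)₊ = max{λ−1, 0}. -/
open MeasureTheory
open scoped ENNReal
set_option maxHeartbeats 1000000

theorem aux_stmt3 {E : Type*} [NormedAddCommGroup E] [MeasurableSpace E]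
    [OpensMeasurableSpace E] [SecondCountableTopology E] (l : ℝ) (hl : 0 < l)
    (μ : Measure E) [IsProbabilityMeasure μ]
    (a : E) (r : ℝ) (hr : 0 < r) :
    ENNReal.ofReal (2 ^ (1 - max (l - 1) 0)) * μ (Metric.ball a r) *
      ((∫⁻ y, ENNReal.ofReal (‖y - a‖ ^ l) ∂μ)
        - ENNReal.ofReal (2 ^ (max (l - 1) 0) * r ^ l))
      ≤ ∫⁻ x, ∫⁻ y, ENNReal.ofReal (‖x - y‖ ^ l) ∂μ ∂μ := by
  classical
  set c : ℝ := max (l - 1) 0 with hc_def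
  have hc : 0 ≤ c := le_max_right _ _
  set B : Set E := Metric.ball a r with hB_def
  have hBm : MeasurableSet B := measurableSet_ball
  set g : E → ℝ≥0∞ := fun y => ENNReal.ofReal (‖y - a‖ ^ l) with hg_def
  set f : E → E → ℝ≥0∞ := fun x y => ENNReal.ofReal (‖x - y‖ ^ l) with hf_def
  set Kk : ℝ≥0∞ := (2 : ℝ≥0∞) ^ c with hKk_def
  have hKk_ne_top : Kk ≠ ∞ := by
    simp [hKk_def, ENNReal.rpow_eq_top_iff]
  have hKk_ne_zero : Kk ≠ 0 := by
    simp [hKk_def, ENNReal.rpow_eq_zero_iff]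
  have hKk_one_le : 1 ≤ Kk := by
    have : (2 : ℝ≥0∞) ^ (0 : ℝ) ≤ (2 : ℝ≥0∞) ^ c :=
      ENNReal.rpow_le_rpow_of_exponent_le one_le_two hc
    simpa using this
  set R : ℝ≥0∞ := ENNReal.ofReal (r ^ l) with hR_def
  set T : ℝ≥0∞ := ∫⁻ y, g y ∂μ with hT_def
  set m : ℝ≥0∞ := μ B with hm_def
  have hm_le_one : m ≤ 1 := prob_le_one
  have hm_ne_top : m ≠ ∞ := (lt_of_le_of_lt hm_le_one ENNReal.one_lt_top).ne
  -- measurability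
  have hfm : Measurable (Function.uncurry f) := by
    have h1 : Continuous fun p : E × E => ‖p.1 - p.2‖ ^ l :=
      (continuous_fst.sub continuous_snd).norm.rpow_const fun _ => Or.inr hl.le
    exact (ENNReal.continuous_ofReal.comp h1).measurable
  have hgm : Measurable g := by
    have h1 : Continuous fun y : E => ‖y - a‖ ^ l :=
      (continuous_id.sub continuous_const).norm.rpow_const fun _ => Or.inr hl.le
    exact (ENNReal.continuous_ofReal.comp h1).measurable
  set F : E → ℝ≥0∞ := fun x => ∫⁻ y, f x y ∂μ with hF_def
  set FB : E → ℝ≥0∞ := fun x => ∫⁻ y in B, f x y ∂μ with hFB_def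
  have hFm : Measurable F := hfm.lintegral_prod_right
  have hFBm : Measurable FB := hfm.lintegral_prod_right
  have hfxm : ∀ x : E, Measurable fun y => f x y := fun x =>
    hfm.comp (measurable_const.prodMk measurable_id)
  -- key pointwise inequality
  have hkey : ∀ x y : E, x ∈ B → g y ≤ Kk * (f x y + R) := by
    intro x y hx
    have hx' : ‖x - a‖ < r := by simpa [hB_def, dist_eq_norm] using hx
    have htri : ‖y - a‖ ≤ ‖x - y‖ + r := by
      calc ‖y - a‖ = ‖(y - x) + (x - a)‖ := by rw [sub_add_sub_cancel]
        _ ≤ ‖y - x‖ + ‖x - a‖ := norm_add_le _ _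
        _ ≤ ‖x - y‖ + r := by rw [norm_sub_rev]; exact add_le_add_right hx'.le _
    have h1 : g y ≤ (ENNReal.ofReal ‖x - y‖ + ENNReal.ofReal r) ^ l := by
      rw [hg_def]
      simp only
      rw [← ENNReal.ofReal_rpow_of_nonneg (norm_nonneg _) hl.le,
        ← ENNReal.ofReal_add (norm_nonneg _) hr.le]
      exact ENNReal.rpow_le_rpow (ENNReal.ofReal_le_ofReal htri) hl.le
    have h2 : (ENNReal.ofReal ‖x - y‖ + ENNReal.ofReal r) ^ l ≤ Kk * (f x y + R) := by
      have hfx : f x y = (ENNReal.ofReal ‖x - y‖) ^ l := by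
        rw [hf_def]; simp only
        rw [← ENNReal.ofReal_rpow_of_nonneg (norm_nonneg _) hl.le]
      have hR' : R = (ENNReal.ofReal r) ^ l := by
        rw [hR_def, ← ENNReal.ofReal_rpow_of_nonneg hr.le hl.le]
      rw [hfx, hR']
      rcases le_total l 1 with hl1 | hl1
      · have hc0 : c = 0 := by simp [hc_def]; linarith
        rw [hKk_def, hc0, ENNReal.rpow_zero, one_mul]
        exact ENNReal.rpow_add_le_add_rpow _ _ hl.le hl1
      · have hc1 : c = l - 1 := by simp [hc_def]; linarith
        rw [hKk_def, hc1]
        exact ENNReal.rpow_add_le_mul_rpow_add_rpow _ _ hl1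
    exact h1.trans h2
  -- T_in bound
  have hTin : ∫⁻ y in B, g y ∂μ ≤ m * R := by
    calc ∫⁻ y in B, g y ∂μ ≤ ∫⁻ _ in B, R ∂μ := by
          refine setLIntegral_mono measurable_const fun y hy => ?_
          have hy' : ‖y - a‖ < r := by simpa [hB_def, dist_eq_norm] using hy
          exact ENNReal.ofReal_le_ofReal
            (Real.rpow_le_rpow (norm_nonneg _) hy'.le hl.le)
      _ = R * m := setLIntegral_const _ _
      _ = m * R := mul_comm _ _
  -- bound 1 : m * T ≤ Kk * (A + m * R)
  set A : ℝ≥0∞ := ∫⁻ x in B, F x ∂μ with hA_def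
  have hbound1 : m * T ≤ Kk * (A + m * R) := by
    have hTx : ∀ x ∈ B, T ≤ Kk * (F x + R) := by
      intro x hx
      calc T ≤ ∫⁻ y, Kk * (f x y + R) ∂μ := lintegral_mono fun y => hkey x y hx
        _ = Kk * (F x + R) := by
          rw [lintegral_const_mul' _ _ hKk_ne_top,
            lintegral_add_right _ measurable_const, lintegral_const, measure_univ, mul_one]
    calc m * T = T * m := mul_comm _ _
      _ = ∫⁻ _ in B, T ∂μ := (setLIntegral_const _ _).symm
      _ ≤ ∫⁻ x in B, Kk * (F x + R) ∂μ :=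
          setLIntegral_mono ((hFm.add measurable_const).const_mul _) hTx
      _ = Kk * (A + m * R) := by
        rw [lintegral_const_mul' _ _ hKk_ne_top,
          lintegral_add_right _ measurable_const, setLIntegral_const,
          ← hA_def, mul_comm R m]
  -- bound 2 : m * T_out ≤ Kk * (D' + R * m * μ Bᶜ)
  set Tout : ℝ≥0∞ := ∫⁻ y in Bᶜ, g y ∂μ with hTout_def
  set D' : ℝ≥0∞ := ∫⁻ x in Bᶜ, FB x ∂μ with hD_def
  have hbound2 : m * Tout ≤ Kk * (D' + R * m * μ Bᶜ) := by
    have hx4 : ∀ x : E, m * g x ≤ Kk * (FB x + R * m) := by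
      intro x
      calc m * g x = g x * m := mul_comm _ _
        _ = ∫⁻ _ in B, g x ∂μ := (setLIntegral_const _ _).symm
        _ ≤ ∫⁻ y in B, Kk * (f x y + R) ∂μ := by
            refine setLIntegral_mono (((hfxm x).add measurable_const).const_mul _)
              fun y hy => ?_
            have := hkey y x hy
            rwa [show f y x = f x y by simp only [hf_def]; rw [norm_sub_rev]] at this
        _ = Kk * (FB x + R * m) := by
          rw [lintegral_const_mul' _ _ hKk_ne_top,
            lintegral_add_right _ measurable_const, setLIntegral_const]
    calc m * Tout = ∫⁻ x in Bᶜ, m * g x ∂μ := by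
          rw [lintegral_const_mul' _ _ hm_ne_top]
      _ ≤ ∫⁻ x in Bᶜ, Kk * (FB x + R * m) ∂μ :=
          setLIntegral_mono ((hFBm.add measurable_const).const_mul _) fun x _ => hx4 x
      _ = Kk * (D' + R * m * μ Bᶜ) := by
          rw [lintegral_const_mul' _ _ hKk_ne_top,
            lintegral_add_right _ measurable_const, setLIntegral_const, ← hD_def, mul_assoc]
  -- A + D' ≤ I
  set I : ℝ≥0∞ := ∫⁻ x, F x ∂μ with hI_def
  have hAD : A + D' ≤ I := by
    have hsplit : A + ∫⁻ x in Bᶜ, F x ∂μ = I := lintegral_add_compl F hBm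
    have hD'le : D' ≤ ∫⁻ x in Bᶜ, F x ∂μ := by
      refine lintegral_mono fun x => ?_
      exact setLIntegral_le_lintegral _ _
    calc A + D' ≤ A + ∫⁻ x in Bᶜ, F x ∂μ := add_le_add_right hD'le _
      _ = I := hsplit
  -- main inequality
  have hTsplit : (∫⁻ y in B, g y ∂μ) + Tout = T := lintegral_add_compl g hBm
  have hcompl : m + μ Bᶜ = 1 := by
    rw [hm_def]; rw [measure_add_measure_compl hBm, measure_univ]
  have main : 2 * (m * T) ≤ Kk * I + 2 * (Kk * (m * R)) := by
    have h2T : 2 * (m * T) = m * T + (m * (∫⁻ y in B, g y ∂μ) + m * Tout) := by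
      rw [← hTsplit]; ring
    rw [h2T]
    have h1 : m * (∫⁻ y in B, g y ∂μ) ≤ Kk * (m * (m * R)) := by
      calc m * (∫⁻ y in B, g y ∂μ) ≤ m * (m * R) := mul_le_mul_right hTin _
        _ = 1 * (m * (m * R)) := (one_mul _).symm
        _ ≤ Kk * (m * (m * R)) := mul_le_mul_left hKk_one_le _
    calc m * T + (m * (∫⁻ y in B, g y ∂μ) + m * Tout)
        ≤ Kk * (A + m * R) + (Kk * (m * (m * R)) + Kk * (D' + R * m * μ Bᶜ)) :=
          add_le_add hbound1 (add_le_add h1 hbound2)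
      _ = Kk * (A + D') + Kk * (m * R) * (1 + m + μ Bᶜ) := by ring
      _ = Kk * (A + D') + Kk * (m * R) * 2 := by
          rw [add_assoc, hcompl]; norm_num
      _ ≤ Kk * I + 2 * (Kk * (m * R)) := by
          rw [mul_comm (Kk * (m * R)) 2]
          exact add_le_add_left (mul_le_mul_right hAD _) _
  -- conclude
  have hK'eq : ENNReal.ofReal (2 ^ (1 - c)) = (2 : ℝ≥0∞) ^ (1 - c) := by
    rw [← ENNReal.ofReal_rpow_of_pos (by norm_num : (0:ℝ) < 2)]
    norm_num
  have hKkK' : Kk * (2 : ℝ≥0∞) ^ (1 - c) = 2 := by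
    rw [hKk_def, ← ENNReal.rpow_add _ _ two_ne_zero ENNReal.ofNat_ne_top]
    norm_num
  have hS : ENNReal.ofReal (2 ^ c * r ^ l) = Kk * R := by
    rw [ENNReal.ofReal_mul (by positivity), hR_def, hKk_def,
      ← ENNReal.ofReal_rpow_of_pos (by norm_num : (0:ℝ) < 2)]
    norm_num
  rw [hS, hK'eq]
  rw [← ENNReal.mul_le_mul_iff_right hKk_ne_zero hKk_ne_top]
  calc Kk * ((2:ℝ≥0∞) ^ (1 - c) * m * (T - Kk * R))
      = 2 * m * (T - Kk * R) := by
        rw [show Kk * ((2:ℝ≥0∞) ^ (1 - c) * m * (T - Kk * R))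
            = (Kk * (2:ℝ≥0∞) ^ (1 - c)) * m * (T - Kk * R) by ring, hKkK']
    _ = 2 * m * T - 2 * m * (Kk * R) :=
        ENNReal.mul_sub fun _ _ => ENNReal.mul_ne_top ENNReal.ofNat_ne_top hm_ne_top
    _ ≤ Kk * I := by
        rw [tsub_le_iff_right]
        calc 2 * m * T = 2 * (m * T) := by ring
          _ ≤ Kk * I + 2 * (Kk * (m * R)) := main
          _ = Kk * I + 2 * m * (Kk * R) := by ring

theorem stmt_3 (N : ℕ) (hN : 1 ≤ N) (l : ℝ) (hl : 0 < l)
    (μ : Measure (EuclideanSpace ℝ (Fin N))) [IsProbabilityMeasure μ]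
    (a : EuclideanSpace ℝ (Fin N)) (r : ℝ) (hr : 0 < r) :
    ENNReal.ofReal (2 ^ (1 - max (l - 1) 0)) * μ (Metric.ball a r) *
      ((∫⁻ y, ENNReal.ofReal (‖y - a‖ ^ l) ∂μ)
        - ENNReal.ofReal (2 ^ (max (l - 1) 0) * r ^ l))
      ≤ ∫⁻ x, ∫⁻ y, ENNReal.ofReal (‖x - y‖ ^ l) ∂μ ∂μ :=
  aux_stmt3 l hl μ a r hr
end

section
/- Let ρ : ℝ^N → [0,∞) be a radially symmetric non-increasing integrable function. Then for every x ∈ ℝ^N, ∫_{ℝ^N} |x − y|^λ ρ(y) dy ≥ ∫_{ℝ^N} |y|^λ ρ(y) dy, for any λ > 0. Consequently I_λ[ρ] := ∬ |x−y|^λ ρ(x)ρ(y) dx dy ≥ (∫ |y|^λ ρ(y) dy)(∫ ρ dx). -/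
open MeasureTheory Metric Set

lemma aux_ofReal_layer (a : ℝ) :
    ENNReal.ofReal a = ∫⁻ s in Set.Ioi (0:ℝ), Set.indicator {s | s < a} (fun _ => (1:ENNReal)) s := by
  rw [show {s | s < a} = Set.Iio a from rfl,
    lintegral_indicator_const measurableSet_Iio,
    Measure.restrict_apply measurableSet_Iio]
  have : Set.Iio a ∩ Set.Ioi 0 = Set.Ioo 0 a := by ext s; simp [and_comm]
  rw [this, Real.volume_Ioo, sub_zero, one_mul]

lemma aux_set_ineq {E : Type*} [NormedAddCommGroup E] [NormedSpace ℝ E] [MeasurableSpace E]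
    [BorelSpace E] [FiniteDimensional ℝ E] (μ : Measure E) [μ.IsAddHaarMeasure] (ρ : E → ℝ)
    (hsym : ∀ x y : E, ‖x‖ ≤ ‖y‖ → ρ y ≤ ρ x) (s r : ℝ) (x : E) :
    μ ({y | s < ρ y} ∩ closedBall x r) ≤ μ ({y | s < ρ y} ∩ closedBall 0 r) := by
  by_cases h : ∃ y ∈ {y | s < ρ y}, r < ‖y‖
  · obtain ⟨y, hy, hry⟩ := h
    have hsub : closedBall (0:E) r ⊆ {y | s < ρ y} := by
      intro z hz
      simp only [mem_closedBall, dist_zero_right] at hz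
      exact lt_of_lt_of_le hy (hsym z y (hz.trans hry.le))
    calc μ ({y | s < ρ y} ∩ closedBall x r) ≤ μ (closedBall x r) :=
          measure_mono inter_subset_right
      _ = μ (closedBall 0 r) := μ.addHaar_closedBall_center x r
      _ = μ ({y | s < ρ y} ∩ closedBall 0 r) := by
          rw [inter_eq_right.mpr hsub]
  · push_neg at h
    have hsub : {y | s < ρ y} ⊆ closedBall (0:E) r := by
      intro z hz
      simpa [mem_closedBall, dist_zero_right] using h z hz
    calc μ ({y | s < ρ y} ∩ closedBall x r) ≤ μ {y | s < ρ y} :=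
          measure_mono inter_subset_left
      _ = μ ({y | s < ρ y} ∩ closedBall 0 r) := by rw [inter_eq_left.mpr hsub]

section aux
variable {E : Type*} [MeasureSpace E] [SFinite (volume : Measure E)]

lemma aux_slice (ρ : E → ℝ) (hρm : Measurable ρ) (B : Set E) :
    ∫⁻ y in B, ENNReal.ofReal (ρ y) =
      ∫⁻ s in Set.Ioi (0:ℝ), volume ({y | s < ρ y} ∩ B) := by
  have h1 : ∀ y, ENNReal.ofReal (ρ y)
      = ∫⁻ s in Set.Ioi (0:ℝ), Set.indicator {s | s < ρ y} (fun _ => (1:ENNReal)) s :=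
    fun y => aux_ofReal_layer (ρ y)
  simp_rw [h1]
  rw [lintegral_lintegral_swap]
  · congr 1
    ext s
    have h2 : ∀ y, Set.indicator {s' | s' < ρ y} (fun _ => (1:ENNReal)) s
        = Set.indicator {y | s < ρ y} (fun _ => (1:ENNReal)) y := by
      intro y; simp only [Set.indicator_apply, Set.mem_setOf_eq]
    simp_rw [h2]
    have hms : MeasurableSet {y : E | s < ρ y} := measurableSet_lt measurable_const hρm
    rw [lintegral_indicator_const hms, Measure.restrict_apply hms, one_mul]
  · apply Measurable.aemeasurable
    have : (Function.uncurry fun (y : E) (s : ℝ) =>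
        Set.indicator {s' | s' < ρ y} (fun _ => (1:ENNReal)) s)
        = Set.indicator {p : E × ℝ | p.2 < ρ p.1} (fun _ => (1:ENNReal)) := by
      ext p; simp [Function.uncurry, Set.indicator_apply]
    rw [this]
    exact measurable_const.indicator
      (measurableSet_lt measurable_snd (hρm.comp measurable_fst))

lemma aux_slice2 (ρ f : E → ℝ) (hρm : Measurable ρ) (hfm : Measurable f)
    (hf : ∀ y, 0 ≤ f y) :
    ∫⁻ y, ENNReal.ofReal (f y * ρ y) =
      ∫⁻ t in Set.Ioi (0:ℝ), ∫⁻ y in {y | t < f y}, ENNReal.ofReal (ρ y) := by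
  have h1 : ∀ y, ENNReal.ofReal (f y * ρ y)
      = ∫⁻ t in Set.Ioi (0:ℝ),
          Set.indicator {t | t < f y} (fun _ => ENNReal.ofReal (ρ y)) t := by
    intro y
    rw [ENNReal.ofReal_mul (hf y), aux_ofReal_layer (f y),
      show {s | s < f y} = Set.Iio (f y) from rfl,
      ← lintegral_mul_const _ (measurable_const.indicator measurableSet_Iio)]
    congr 1; ext t
    simp [Set.indicator_apply]
  simp_rw [h1]
  rw [lintegral_lintegral_swap]
  · congr 1
    ext t
    have hms : MeasurableSet {y : E | t < f y} := measurableSet_lt measurable_const hfm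
    rw [← lintegral_indicator hms]
    congr 1
  · apply Measurable.aemeasurable
    have : (Function.uncurry fun (y : E) (t : ℝ) =>
        Set.indicator {t' | t' < f y} (fun _ => ENNReal.ofReal (ρ y)) t)
        = Set.indicator {p : E × ℝ | p.2 < f p.1}
            (fun p => ENNReal.ofReal (ρ p.1)) := by
      ext p; simp [Function.uncurry, Set.indicator_apply]
    rw [this]
    exact ((ENNReal.measurable_ofReal.comp (hρm.comp measurable_fst))).indicator
      (measurableSet_lt measurable_snd (hfm.comp measurable_fst))

end aux

theorem stmt_5 (N : ℕ) (hN : 1 ≤ N) (l : ℝ) (hl : 0 < l)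
    (ρ : EuclideanSpace ℝ (Fin N) → ℝ) (hρ : ∀ x, 0 ≤ ρ x)
    (hint : Integrable ρ)
    (hsym : ∀ x y : EuclideanSpace ℝ (Fin N), ‖x‖ ≤ ‖y‖ → ρ y ≤ ρ x) :
    (∀ x : EuclideanSpace ℝ (Fin N),
      (∫⁻ y, ENNReal.ofReal (‖y‖ ^ l * ρ y)) ≤
        ∫⁻ y, ENNReal.ofReal (‖x - y‖ ^ l * ρ y)) ∧
    (∫⁻ y, ENNReal.ofReal (‖y‖ ^ l * ρ y)) * ENNReal.ofReal (∫ x, ρ x) ≤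
      ∫⁻ x, ∫⁻ y, ENNReal.ofReal (‖x - y‖ ^ l * ρ x * ρ y) := by
  have hrpm : Measurable fun s : ℝ => s ^ l :=
    (Real.continuous_rpow_const hl.le).measurable
  -- measurability of ρ
  have hρm : Measurable ρ := by
    set e : EuclideanSpace ℝ (Fin N) := EuclideanSpace.single (⟨0, hN⟩ : Fin N) (1:ℝ)
      with he_def
    have he : ‖e‖ = 1 := by
      rw [he_def, EuclideanSpace.norm_single]; exact norm_one
    have hnorm : ∀ t : ℝ, ‖(max t 0) • e‖ = max t 0 := by
      intro t
      rw [norm_smul, he, mul_one, Real.norm_eq_abs, abs_of_nonneg (le_max_right t 0)]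
    have hanti : Antitone (fun t : ℝ => ρ ((max t 0) • e)) := by
      intro s t hst
      exact hsym _ _ (by rw [hnorm, hnorm]; exact max_le_max hst le_rfl)
    have hρeq : ρ = (fun t : ℝ => ρ ((max t 0) • e))
        ∘ (fun y : EuclideanSpace ℝ (Fin N) => ‖y‖) := by
      funext y
      have h2 : ‖(max ‖y‖ 0) • e‖ = ‖y‖ := by
        rw [hnorm]; exact max_eq_left (norm_nonneg y)
      exact le_antisymm (hsym _ _ h2.le) (hsym _ _ h2.ge)
    rw [hρeq]
    exact hanti.measurable.comp measurable_norm
  have hT : (∫⁻ y, ENNReal.ofReal (ρ y)) ≠ ⊤ := by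
    have := hint.hasFiniteIntegral
    rw [hasFiniteIntegral_iff_ofReal (ae_of_all _ hρ)] at this
    exact this.ne
  -- ball inequality
  have hball : ∀ (x : EuclideanSpace ℝ (Fin N)) (r : ℝ),
      ∫⁻ y in closedBall x r, ENNReal.ofReal (ρ y)
        ≤ ∫⁻ y in closedBall 0 r, ENNReal.ofReal (ρ y) := by
    intro x r
    rw [aux_slice ρ hρm, aux_slice ρ hρm]
    exact lintegral_mono fun s => aux_set_ineq volume ρ hsym s r x
  -- complement inequality
  have hcompl : ∀ (x : EuclideanSpace ℝ (Fin N)) (r : ℝ),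
      ∫⁻ y in (closedBall (0:EuclideanSpace ℝ (Fin N)) r)ᶜ, ENNReal.ofReal (ρ y)
        ≤ ∫⁻ y in (closedBall x r)ᶜ, ENNReal.ofReal (ρ y) := by
    intro x r
    have h1 := lintegral_add_compl (fun y => ENNReal.ofReal (ρ y))
      (measurableSet_closedBall (x := x) (ε := r)) (μ := volume)
    have h0 := lintegral_add_compl (fun y => ENNReal.ofReal (ρ y))
      (measurableSet_closedBall (x := (0:EuclideanSpace ℝ (Fin N))) (ε := r)) (μ := volume)
    have hu : (∫⁻ y in closedBall x r, ENNReal.ofReal (ρ y)) ≠ ⊤ :=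
      ((setLIntegral_le_lintegral _ _).trans_lt hT.lt_top).ne
    apply ENNReal.le_of_add_le_add_left hu
    calc (∫⁻ y in closedBall x r, ENNReal.ofReal (ρ y))
          + ∫⁻ y in (closedBall (0:EuclideanSpace ℝ (Fin N)) r)ᶜ, ENNReal.ofReal (ρ y)
        ≤ (∫⁻ y in closedBall (0:EuclideanSpace ℝ (Fin N)) r, ENNReal.ofReal (ρ y))
          + ∫⁻ y in (closedBall (0:EuclideanSpace ℝ (Fin N)) r)ᶜ, ENNReal.ofReal (ρ y) :=
          add_le_add_left (hball x r) _
      _ = ∫⁻ y, ENNReal.ofReal (ρ y) := h0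
      _ = (∫⁻ y in closedBall x r, ENNReal.ofReal (ρ y))
          + ∫⁻ y in (closedBall x r)ᶜ, ENNReal.ofReal (ρ y) := h1.symm
  -- main pointwise inequality
  have key : ∀ x : EuclideanSpace ℝ (Fin N),
      (∫⁻ y, ENNReal.ofReal (‖y‖ ^ l * ρ y)) ≤
        ∫⁻ y, ENNReal.ofReal (‖x - y‖ ^ l * ρ y) := by
    intro x
    have hfm0 : Measurable fun y : EuclideanSpace ℝ (Fin N) => ‖y‖ ^ l :=
      hrpm.comp measurable_norm
    have hfmx : Measurable fun y : EuclideanSpace ℝ (Fin N) => ‖x - y‖ ^ l :=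
      hrpm.comp ((measurable_const.sub measurable_id).norm)
    rw [aux_slice2 ρ _ hρm hfm0 (fun y => Real.rpow_nonneg (norm_nonneg y) l),
      aux_slice2 ρ _ hρm hfmx (fun y => Real.rpow_nonneg (norm_nonneg _) l)]
    apply lintegral_mono_ae
    filter_upwards [ae_restrict_mem measurableSet_Ioi] with t ht
    have hset0 : {y : EuclideanSpace ℝ (Fin N) | t < ‖y‖ ^ l}
        = (closedBall (0:EuclideanSpace ℝ (Fin N)) (t ^ l⁻¹))ᶜ := by
      ext y
      simp only [mem_setOf_eq, mem_compl_iff, mem_closedBall, dist_zero_right, not_le]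
      exact (Real.rpow_inv_lt_iff_of_pos (le_of_lt ht) (norm_nonneg y) hl).symm
    have hsetx : {y : EuclideanSpace ℝ (Fin N) | t < ‖x - y‖ ^ l}
        = (closedBall x (t ^ l⁻¹))ᶜ := by
      ext y
      simp only [mem_setOf_eq, mem_compl_iff, mem_closedBall, dist_eq_norm, not_le]
      rw [norm_sub_rev y x]
      exact (Real.rpow_inv_lt_iff_of_pos (le_of_lt ht) (norm_nonneg _) hl).symm
    rw [hset0, hsetx]
    exact hcompl x (t ^ l⁻¹)
  refine ⟨key, ?_⟩
  -- consequence
  have hmx : ∀ x : EuclideanSpace ℝ (Fin N),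
      Measurable fun y : EuclideanSpace ℝ (Fin N) =>
        ENNReal.ofReal (‖x - y‖ ^ l * ρ y) := by
    intro x
    exact ENNReal.measurable_ofReal.comp
      ((hrpm.comp ((measurable_const.sub measurable_id).norm)).mul hρm)
  have hstep : ∀ x : EuclideanSpace ℝ (Fin N),
      (∫⁻ y, ENNReal.ofReal (‖x - y‖ ^ l * ρ x * ρ y))
        = ENNReal.ofReal (ρ x) * ∫⁻ y, ENNReal.ofReal (‖x - y‖ ^ l * ρ y) := by
    intro x
    rw [← lintegral_const_mul _ (hmx x)]
    congr 1
    funext y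
    rw [← ENNReal.ofReal_mul (hρ x)]
    congr 1
    ring
  have hρint : ENNReal.ofReal (∫ x, ρ x) = ∫⁻ x, ENNReal.ofReal (ρ x) :=
    ofReal_integral_eq_lintegral_ofReal hint (ae_of_all _ hρ)
  have hmρ : Measurable fun x : EuclideanSpace ℝ (Fin N) => ENNReal.ofReal (ρ x) :=
    ENNReal.measurable_ofReal.comp hρm
  calc (∫⁻ y, ENNReal.ofReal (‖y‖ ^ l * ρ y)) * ENNReal.ofReal (∫ x, ρ x)
      = ∫⁻ x, ENNReal.ofReal (ρ x) * (∫⁻ y, ENNReal.ofReal (‖y‖ ^ l * ρ y)) := by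
        rw [hρint, lintegral_mul_const _ hmρ, mul_comm]
    _ ≤ ∫⁻ x, ENNReal.ofReal (ρ x) * (∫⁻ y, ENNReal.ofReal (‖x - y‖ ^ l * ρ y)) :=
        lintegral_mono fun x => mul_le_mul_right (key x) _
    _ = ∫⁻ x, ∫⁻ y, ENNReal.ofReal (‖x - y‖ ^ l * ρ x * ρ y) := by
        congr 1; funext x; exact (hstep x).symm
end

section
/- Carlson–Levin type inequality: let λ > 0 and N/(N+λ) < q < 1. There is a constant c > 0, depending only on N, λ, q, such that for every nonnegative measurable ρ on ℝ^N, (∫_{ℝ^N} ρ dx)^{1 − N(1−q)/(λq)} (∫_{ℝ^N} |x|^λ ρ(x) dx)^{N(1−q)/(λq)} ≥ c (∫_{ℝ^N} ρ^q dx)^{1/q}. -/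
open MeasureTheory

open scoped ENNReal

private lemma lintegral_comp_smul_aux {N : ℕ} (f : EuclideanSpace ℝ (Fin N) → ℝ≥0∞)
    (hf : Measurable f) {R : ℝ} (hR : R ≠ 0) :
    ∫⁻ x, f (R • x) = ENNReal.ofReal |(R ^ N)⁻¹| * ∫⁻ x, f x := by
  have h1 : (∫⁻ x, f (R • x)) = ∫⁻ y, f y ∂(Measure.map (R • ·) volume) :=
    (lintegral_map hf (measurable_const_smul R)).symm
  rw [h1, Measure.map_addHaar_smul volume hR, lintegral_smul_measure,
    finrank_euclideanSpace_fin, smul_eq_mul]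


private lemma real_bound {a l s : ℝ} (ha : 0 ≤ a) (hl : 0 < l) (hs : 0 < s) :
    (1 + a ^ l) ^ (-s) ≤ 2 ^ (l * s) * (1 + a) ^ (-(l * s)) := by
  have hb : (0:ℝ) < 1 + a ^ l := by positivity
  have key : (1+a)^l ≤ 2^l * (1+a^l) := by
    rcases le_total a 1 with hc | hc
    · have h1 : (1+a)^l ≤ 2^l :=
        Real.rpow_le_rpow (by positivity) (by linarith) hl.le
      have h2 : (2:ℝ)^l ≤ 2^l * (1+a^l) := by
        have h3 : (1:ℝ) ≤ 1 + a^l := by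
          have := Real.rpow_nonneg ha l; linarith
        nlinarith [Real.rpow_nonneg (by norm_num : (0:ℝ) ≤ 2) l]
      linarith
    · have h1 : (1+a)^l ≤ (2*a)^l :=
        Real.rpow_le_rpow (by positivity) (by linarith) hl.le
      have h2 : (2*a)^l = 2^l * a^l := Real.mul_rpow (by norm_num) ha
      have h3 : (2:ℝ)^l * a^l ≤ 2^l * (1+a^l) := by
        nlinarith [Real.rpow_nonneg (by norm_num : (0:ℝ) ≤ 2) l,
          Real.rpow_nonneg ha l]
      linarith
  have hX : (0:ℝ) < (1+a^l)^s := Real.rpow_pos_of_pos hb s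
  have hY : (0:ℝ) < (1+a)^(l*s) := Real.rpow_pos_of_pos (by linarith) _
  have hstep : (1+a)^(l*s) ≤ 2^(l*s) * (1+a^l)^s := by
    have e1 : (1+a)^(l*s) = ((1+a)^l)^s := Real.rpow_mul (by linarith) l s
    have e2 : (2:ℝ)^(l*s) = ((2:ℝ)^l)^s := Real.rpow_mul (by norm_num) l s
    rw [e1, e2, ← Real.mul_rpow (by positivity) (by positivity)]
    exact Real.rpow_le_rpow (by positivity) key hs.le
  rw [Real.rpow_neg hb.le, Real.rpow_neg (by linarith : (0:ℝ) ≤ 1 + a),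
    inv_eq_one_div, inv_eq_one_div, mul_one_div, div_le_div_iff₀ hX hY, one_mul]
  nlinarith

theorem stmt_6 (N : ℕ) (hN : 1 ≤ N) (l q : ℝ) (hl : 0 < l)
    (hq1 : q < 1) (hq0 : (N : ℝ) / (N + l) < q) :
    ∃ c : ℝ, 0 < c ∧ ∀ ρ : EuclideanSpace ℝ (Fin N) → ENNReal, Measurable ρ →
      ENNReal.ofReal c * (∫⁻ x, ρ x ^ q) ^ (1 / q) ≤
        (∫⁻ x, ρ x) ^ (1 - (N : ℝ) * (1 - q) / (l * q)) *
          (∫⁻ x, ENNReal.ofReal (‖x‖ ^ l) * ρ x) ^ ((N : ℝ) * (1 - q) / (l * q)) := by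
  classical
  have hNpos : (0:ℝ) < N := by exact_mod_cast hN
  have hNl : (0:ℝ) < (N:ℝ) + l := by linarith
  have hq0' : (0:ℝ) < q := lt_trans (div_pos hNpos hNl) hq0
  have h1q : (0:ℝ) < 1 - q := by linarith
  set s : ℝ := q / (1 - q) with hs_def
  have hs : 0 < s := div_pos hq0' h1q
  have hkey : (N:ℝ) * (1 - q) < l * q := by
    have h := (div_lt_iff₀ hNl).mp hq0
    nlinarith
  have hls : (N:ℝ) < l * s := by
    have hls' : l * s = l * q / (1 - q) := by rw [hs_def]; ring
    rw [hls', lt_div_iff₀ h1q]; nlinarith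
  set θ : ℝ := (N:ℝ) * (1 - q) / (l * q) with hθ_def
  have hθ0 : 0 < θ := by
    apply div_pos; · nlinarith
    · positivity
  have hθ1 : θ < 1 := by
    rw [hθ_def, div_lt_one (by positivity)]; exact hkey
  -- the comparison function and its integral
  set g : EuclideanSpace ℝ (Fin N) → ℝ≥0∞ := fun x => (1 + ENNReal.ofReal (‖x‖ ^ l)) ^ (-s) with hg_def
  have hbase : ∀ x : EuclideanSpace ℝ (Fin N), (0:ℝ) < 1 + ‖x‖ ^ l := by
    intro x; positivity
  have hg_eq : ∀ x : EuclideanSpace ℝ (Fin N), g x = ENNReal.ofReal ((1 + ‖x‖ ^ l) ^ (-s)) := by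
    intro x
    rw [hg_def, ← ENNReal.ofReal_rpow_of_pos (hbase x),
      ENNReal.ofReal_add zero_le_one (Real.rpow_nonneg (norm_nonneg x) l),
      ENNReal.ofReal_one]
  have hgm : Measurable g := by
    apply Measurable.pow_const
    exact (measurable_const.add ((measurable_norm.pow_const l).ennreal_ofReal))
  set C : ℝ≥0∞ := ∫⁻ x : EuclideanSpace ℝ (Fin N), g x with hC_def
  have hC0 : C ≠ 0 := by
    have hsupp : Function.support g = Set.univ := by
      refine Set.eq_univ_iff_forall.mpr fun x => ?_
      have : 0 < g x := by
        refine ENNReal.rpow_pos ?_ ?_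
        · exact lt_of_lt_of_le zero_lt_one le_self_add
        · exact ENNReal.add_ne_top.mpr ⟨ENNReal.one_ne_top, ENNReal.ofReal_ne_top⟩
      exact this.ne'
    have : 0 < C := by
      rw [hC_def, lintegral_pos_iff_support hgm, hsupp]
      exact isOpen_univ.measure_pos volume ⟨0, trivial⟩
    exact this.ne'
  have hCt : C ≠ ⊤ := by
    have hnr : (Module.finrank ℝ (EuclideanSpace ℝ (Fin N)) : ℝ) < l * s := by
      rw [show Module.finrank ℝ (EuclideanSpace ℝ (Fin N)) = N from finrank_euclideanSpace_fin]; exact hls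
    have hint : Integrable (fun x : EuclideanSpace ℝ (Fin N) => (2:ℝ) ^ (l*s) * (1 + ‖x‖) ^ (-(l*s))) volume :=
      (integrable_one_add_norm hnr).const_mul _
    have hb : ∀ x : EuclideanSpace ℝ (Fin N), g x ≤
        ENNReal.ofReal ((2:ℝ) ^ (l*s) * (1 + ‖x‖) ^ (-(l*s))) := by
      intro x
      rw [hg_eq x]
      exact ENNReal.ofReal_le_ofReal (real_bound (norm_nonneg x) hl hs)
    exact ((lintegral_mono hb).trans_lt hint.lintegral_lt_top).ne
  set e1 : ℝ := (1 - q) / q with he1_def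
  have he1 : 0 ≤ e1 := by positivity
  set K : ℝ≥0∞ := 2 * C ^ e1 with hK_def
  have hCe0 : C ^ e1 ≠ 0 := by
    simp [ENNReal.rpow_eq_zero_iff, hC0, hCt]
  have hCet : C ^ e1 ≠ ⊤ := (ENNReal.rpow_lt_top_of_nonneg he1 hCt).ne
  have hK0 : K ≠ 0 := by
    simp [hK_def, hCe0]
  have hKt : K ≠ ⊤ := by
    simp only [hK_def]
    exact ENNReal.mul_ne_top (by norm_num) hCet
  refine ⟨(K.toReal)⁻¹, inv_pos.mpr (ENNReal.toReal_pos hK0 hKt), ?_⟩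
  have hcK : ENNReal.ofReal (K.toReal)⁻¹ = K⁻¹ := by
    rw [ENNReal.ofReal_inv_of_pos (ENNReal.toReal_pos hK0 hKt),
      ENNReal.ofReal_toReal hKt]
  intro ρ hρ
  set A : ℝ≥0∞ := ∫⁻ x, ρ x with hA_def
  set B : ℝ≥0∞ := ∫⁻ x : EuclideanSpace ℝ (Fin N), ENNReal.ofReal (‖x‖ ^ l) * ρ x with hB_def
  -- the degenerate cases
  have hzero : ρ =ᵐ[volume] (fun _ => (0:ℝ≥0∞)) →
      ENNReal.ofReal (K.toReal)⁻¹ * (∫⁻ x, ρ x ^ q) ^ (1/q) ≤ A ^ (1-θ) * B ^ θ := by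
    intro h
    have h2 : (∫⁻ x, ρ x ^ q) = 0 := by
      rw [← lintegral_zero]
      apply lintegral_congr_ae
      filter_upwards [h] with x hx
      simp [hx, ENNReal.zero_rpow_of_pos hq0']
    rw [h2, ENNReal.zero_rpow_of_pos (by positivity), mul_zero]
    exact zero_le
  by_cases hA0 : A = 0
  · exact hzero ((lintegral_eq_zero_iff hρ).mp hA0)
  have hom : Measurable fun x : EuclideanSpace ℝ (Fin N) => ENNReal.ofReal (‖x‖ ^ l) :=
    (measurable_norm.pow_const l).ennreal_ofReal
  by_cases hB0 : B = 0
  · apply hzero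
    have h := (lintegral_eq_zero_iff (hom.mul hρ)).mp hB0
    haveI : Nonempty (Fin N) := Fin.pos_iff_nonempty.mp hN
    have h0 : ∀ᵐ x : EuclideanSpace ℝ (Fin N) ∂volume, x ≠ 0 := by
      rw [ae_iff]
      have : {x : EuclideanSpace ℝ (Fin N) | ¬ x ≠ 0} = {(0:EuclideanSpace ℝ (Fin N))} := by ext x; simp
      rw [this]
      exact measure_singleton 0
    filter_upwards [h, h0] with x hx hx0
    have hpos : (0:ℝ) < ‖x‖ ^ l := Real.rpow_pos_of_pos (norm_pos_iff.mpr hx0) l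
    have : ENNReal.ofReal (‖x‖ ^ l) ≠ 0 := by
      simp [ENNReal.ofReal_eq_zero, not_le, hpos]
    simpa [this] using hx
  by_cases hAt : A = ⊤
  · have hBθ : B ^ θ ≠ 0 := by
      simp [ENNReal.rpow_eq_zero_iff, hB0, not_lt.mpr hθ0.le]
    rw [hAt, ENNReal.top_rpow_of_pos (by linarith), ENNReal.top_mul hBθ]
    exact le_top
  by_cases hBt : B = ⊤
  · have hAθ : A ^ (1-θ) ≠ 0 := by
      simp [ENNReal.rpow_eq_zero_iff, hA0, hAt]
    rw [hBt, ENNReal.top_rpow_of_pos hθ0, ENNReal.mul_top hAθ]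
    exact le_top
  -- main case : 0 < A,B < ∞
  set t : ℝ≥0∞ := A * B⁻¹ with ht_def
  have ht0 : t ≠ 0 := by
    simp [ht_def, hA0, hBt]
  have htt : t ≠ ⊤ := ENNReal.mul_ne_top hAt (ENNReal.inv_ne_top.mpr hB0)
  set h : EuclideanSpace ℝ (Fin N) → ℝ≥0∞ := fun x => (1 + t * ENNReal.ofReal (‖x‖ ^ l)) ^ (-s) with hh_def
  set w : EuclideanSpace ℝ (Fin N) → ℝ≥0∞ := fun x => A⁻¹ * (1 + t * ENNReal.ofReal (‖x‖ ^ l)) with hw_def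
  have hin0 : ∀ x : EuclideanSpace ℝ (Fin N), (1 + t * ENNReal.ofReal (‖x‖ ^ l)) ≠ 0 := fun x =>
    (lt_of_lt_of_le zero_lt_one le_self_add).ne'
  have hint : ∀ x : EuclideanSpace ℝ (Fin N), (1 + t * ENNReal.ofReal (‖x‖ ^ l)) ≠ ⊤ := fun x =>
    ENNReal.add_ne_top.mpr ⟨ENNReal.one_ne_top,
      ENNReal.mul_ne_top htt ENNReal.ofReal_ne_top⟩
  have hw0 : ∀ x, w x ≠ 0 := fun x =>
    mul_ne_zero (ENNReal.inv_ne_zero.mpr hAt) (hin0 x)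
  have hwt : ∀ x, w x ≠ ⊤ :=
    fun x => ENNReal.mul_ne_top (ENNReal.inv_ne_top.mpr hA0) (hint x)
  have hwm : Measurable w :=
    measurable_const.mul (measurable_const.add (measurable_const.mul hom))
  -- Hölder's inequality
  have hconj : Real.HolderConjugate (1/q) (1/(1-q)) := by
    rw [Real.holderConjugate_iff]
    constructor
    · exact one_lt_one_div hq0' hq1
    · rw [one_div, one_div, inv_inv, inv_inv]; ring
  have holder := ENNReal.lintegral_mul_le_Lp_mul_Lq volume hconj (f := fun x => (ρ x * w x) ^ q) (g := fun x => w x ^ (-q))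
    (((hρ.mul hwm).pow_const q).aemeasurable)
    ((hwm.pow_const (-q)).aemeasurable)
  have hfg : (∫⁻ x, ((fun x => (ρ x * w x) ^ q) * fun x => w x ^ (-q)) x) =
      ∫⁻ x, ρ x ^ q := by
    apply lintegral_congr; intro x
    show (ρ x * w x) ^ q * w x ^ (-q) = ρ x ^ q
    rw [ENNReal.mul_rpow_of_nonneg _ _ hq0'.le, mul_assoc,
      ← ENNReal.rpow_add q (-q) (hw0 x) (hwt x)]
    simp
  have hfp : (∫⁻ x, ((fun x => (ρ x * w x) ^ q) x) ^ (1/q)) = ∫⁻ x, ρ x * w x := by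
    apply lintegral_congr; intro x
    show ((ρ x * w x) ^ q) ^ (1/q) = ρ x * w x
    rw [← ENNReal.rpow_mul, mul_one_div_cancel hq0'.ne', ENNReal.rpow_one]
  have hgp : (∫⁻ x, ((fun x => w x ^ (-q)) x) ^ (1/(1-q))) = ∫⁻ x, w x ^ (-s) := by
    apply lintegral_congr; intro x
    show (w x ^ (-q)) ^ (1/(1-q)) = w x ^ (-s)
    rw [← ENNReal.rpow_mul]
    congr 1
    rw [hs_def]; field_simp
  rw [hfg, hfp, hgp, one_div_one_div, one_div_one_div] at holder
  -- compute ∫ ρ w = 2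
  have hint1 : (∫⁻ x, ρ x * w x) = 2 := by
    have hABt : A⁻¹ * t = B⁻¹ := by
      rw [ht_def, ← mul_assoc, ENNReal.inv_mul_cancel hA0 hAt, one_mul]
    have hpt : ∀ x, ρ x * w x =
        A⁻¹ * ρ x + B⁻¹ * (ENNReal.ofReal (‖x‖ ^ l) * ρ x) := by
      intro x
      rw [← hABt, hw_def]
      ring
    rw [lintegral_congr hpt,
      lintegral_add_left (f := fun x => A⁻¹ * ρ x) (measurable_const.mul hρ),
      lintegral_const_mul _ hρ, lintegral_const_mul _ (f := fun x => ENNReal.ofReal (‖x‖ ^ l) * ρ x) (hom.mul hρ),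
      ← hA_def, ← hB_def, ENNReal.inv_mul_cancel hA0 hAt,
      ENNReal.inv_mul_cancel hB0 hBt]
    norm_num
  -- compute ∫ w^{-s}
  have hint2 : (∫⁻ x, w x ^ (-s)) = A ^ s * ((B * A⁻¹) ^ ((N:ℝ)/l) * C) := by
    have hws : ∀ x, w x ^ (-s) = A ^ s * h x := by
      intro x
      rw [hw_def, hh_def]
      rw [ENNReal.mul_rpow_of_ne_zero (ENNReal.inv_ne_zero.mpr hAt) (hin0 x)]
      congr 1
      rw [ENNReal.inv_rpow, ENNReal.rpow_neg, inv_inv]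
    rw [lintegral_congr hws, lintegral_const_mul _ (f := h)
      ((measurable_const.add (measurable_const.mul hom)).pow_const (-s))]
    congr 1
    -- scaling: ∫ h = (B A⁻¹)^{N/l} * C
    have hAr : (0:ℝ) < A.toReal := ENNReal.toReal_pos hA0 hAt
    have hBr : (0:ℝ) < B.toReal := ENNReal.toReal_pos hB0 hBt
    set r : ℝ := (B.toReal / A.toReal) ^ (1/l) with hr_def
    have hr : 0 < r := Real.rpow_pos_of_pos (by positivity) _
    have hrl : r ^ l = B.toReal / A.toReal := by
      rw [hr_def, ← Real.rpow_mul (by positivity), one_div_mul_cancel hl.ne',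
        Real.rpow_one]
    have htB : t * (B * A⁻¹) = 1 := by
      rw [ht_def]
      calc A * B⁻¹ * (B * A⁻¹) = (A * A⁻¹) * (B⁻¹ * B) := by ring
        _ = 1 := by
          rw [ENNReal.mul_inv_cancel hA0 hAt, ENNReal.inv_mul_cancel hB0 hBt,
            one_mul]
    have hofr : ENNReal.ofReal (B.toReal / A.toReal) = B * A⁻¹ := by
      rw [div_eq_mul_inv, ENNReal.ofReal_mul hBr.le,
        ENNReal.ofReal_inv_of_pos hAr, ENNReal.ofReal_toReal hBt,
        ENNReal.ofReal_toReal hAt]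
    have hcomp : ∀ y : EuclideanSpace ℝ (Fin N), h (r • y) = g y := by
      intro y
      have hnrm : ‖r • y‖ = r * ‖y‖ := by
        rw [norm_smul, Real.norm_eq_abs, abs_of_pos hr]
      have hkey2 : t * ENNReal.ofReal (‖r • y‖ ^ l) = ENNReal.ofReal (‖y‖ ^ l) := by
        rw [hnrm, Real.mul_rpow hr.le (norm_nonneg y), hrl,
          ENNReal.ofReal_mul (div_nonneg hBr.le hAr.le), hofr, ← mul_assoc, htB,
          one_mul]
      show (1 + t * ENNReal.ofReal (‖r • y‖ ^ l)) ^ (-s)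
          = (1 + ENNReal.ofReal (‖y‖ ^ l)) ^ (-s)
      rw [hkey2]
    have hhm : Measurable h :=
      (measurable_const.add (measurable_const.mul hom)).pow_const (-s)
    have hCOV : C = ENNReal.ofReal |(r ^ N)⁻¹| * ∫⁻ x, h x := by
      rw [hC_def, ← lintegral_comp_smul_aux h hhm hr.ne']
      exact (lintegral_congr hcomp).symm
    have hrN : (0:ℝ) < r ^ N := pow_pos hr N
    have hcancel : ENNReal.ofReal (r ^ N) * ENNReal.ofReal |(r ^ N)⁻¹| = 1 := by
      rw [abs_of_pos (by positivity), ← ENNReal.ofReal_mul hrN.le,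
        mul_inv_cancel₀ hrN.ne', ENNReal.ofReal_one]
    have hsolve : (∫⁻ x, h x) = ENNReal.ofReal (r ^ N) * C := by
      rw [hCOV, ← mul_assoc, hcancel, one_mul]
    rw [hsolve]
    congr 1
    -- ofReal (r^N) = (B A⁻¹)^{N/l}
    have : (r:ℝ) ^ N = (B.toReal / A.toReal) ^ ((N:ℝ)/l) := by
      rw [← Real.rpow_natCast r N, hr_def, ← Real.rpow_mul (by positivity)]
      congr 1
      field_simp
    rw [this, ← hofr, ← ENNReal.ofReal_rpow_of_pos (by positivity)]
  -- combine
  have hL : (∫⁻ x, ρ x ^ q) ≤ 2 ^ q * (A ^ s * ((B * A⁻¹) ^ ((N:ℝ)/l) * C)) ^ (1-q) := by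
    calc (∫⁻ x, ρ x ^ q) ≤ (∫⁻ x, ρ x * w x) ^ q * (∫⁻ x, w x ^ (-s)) ^ (1-q) := holder
      _ = 2 ^ q * (A ^ s * ((B * A⁻¹) ^ ((N:ℝ)/l) * C)) ^ (1-q) := by
          rw [hint1, hint2]
  have hmain : (2 ^ q * (A ^ s * ((B * A⁻¹) ^ ((N:ℝ)/l) * C)) ^ (1-q)) ^ (1/q)
      = K * (A ^ (1-θ) * B ^ θ) := by
    have hAne : A ^ s ≠ ⊤ := (ENNReal.rpow_lt_top_of_nonneg hs.le hAt).ne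
    have hZne : (B * A⁻¹) ^ ((N:ℝ)/l) ≠ ⊤ := by
      apply (ENNReal.rpow_lt_top_of_nonneg (by positivity) _).ne
      exact ENNReal.mul_ne_top hBt (ENNReal.inv_ne_top.mpr hA0)
    rw [ENNReal.mul_rpow_of_nonneg _ _ (by positivity : (0:ℝ) ≤ 1/q),
      ← ENNReal.rpow_mul, mul_one_div_cancel hq0'.ne', ENNReal.rpow_one,
      ← ENNReal.rpow_mul]
    have he : (1-q) * (1/q) = e1 := by rw [he1_def]; ring
    rw [he, ENNReal.mul_rpow_of_ne_top hAne (ENNReal.mul_ne_top hZne hCt),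
      ENNReal.mul_rpow_of_ne_top hZne hCt, ← ENNReal.rpow_mul, ← ENNReal.rpow_mul]
    have hse : s * e1 = 1 := by
      rw [hs_def, he1_def]; field_simp
    have hθe : (N:ℝ)/l * e1 = θ := by
      rw [he1_def, hθ_def]; field_simp
    rw [hse, ENNReal.rpow_one, hθe,
      ENNReal.mul_rpow_of_ne_zero hB0 (ENNReal.inv_ne_zero.mpr hAt),
      ENNReal.inv_rpow]
    have hA1θ : A ^ (1-θ) = A * (A ^ θ)⁻¹ := by
      rw [show (1:ℝ) - θ = 1 + (-θ) by ring, ENNReal.rpow_add _ _ hA0 hAt,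
        ENNReal.rpow_one, ENNReal.rpow_neg]
    rw [hA1θ, hK_def]
    ring
  calc ENNReal.ofReal (K.toReal)⁻¹ * (∫⁻ x, ρ x ^ q) ^ (1/q)
      ≤ ENNReal.ofReal (K.toReal)⁻¹ *
          ((2 ^ q * (A ^ s * ((B * A⁻¹) ^ ((N:ℝ)/l) * C)) ^ (1-q)) ^ (1/q)) :=
        mul_le_mul_right (ENNReal.rpow_le_rpow hL (by positivity)) _
    _ = K⁻¹ * (K * (A ^ (1-θ) * B ^ θ)) := by rw [hcK, hmain]
    _ = A ^ (1-θ) * B ^ θ := by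
        rw [← mul_assoc, ENNReal.inv_mul_cancel hK0 hKt, one_mul]
end

section
/- Reverse Hardy–Littlewood–Sobolev inequality (non-sharp form): let λ > 0 and N/(N+λ) < q < 1, and set α = (2N − q(2N+λ))/(N(1−q)). There is a constant C > 0 such that for every nonnegative ρ ∈ L¹(ℝ^N) with ∫ ρ^q dx < ∞, ∬_{ℝ^N×ℝ^N} |x−y|^λ ρ(x)ρ(y) dx dy ≥ C (∫_{ℝ^N} ρ dx)^α (∫_{ℝ^N} ρ^q dx)^{(2−α)/q}. -/
open MeasureTheory
open ENNReal Metric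


lemma holder_set {α : Type*} [MeasurableSpace α] (μ : Measure α) {ρ : α → ℝ≥0∞}
    (hρ : Measurable ρ) {q : ℝ} (hq0 : 0 < q) (hq1 : q < 1) (s : Set α) :
    ∫⁻ x in s, ρ x ^ q ∂μ ≤ (∫⁻ x in s, ρ x ∂μ) ^ q * μ s ^ (1 - q) := by
  have hpq : Real.HolderConjugate (1/q) (1/(1-q)) := by
    rw [Real.holderConjugate_iff]; constructor
    · rw [lt_div_iff₀ hq0]; linarith
    · rw [one_div, one_div, inv_inv, inv_inv]; ring
  have h := ENNReal.lintegral_mul_le_Lp_mul_Lq (μ.restrict s) hpq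
      (f := fun x => ρ x ^ q) (g := fun _ => (1:ℝ≥0∞))
      (hρ.pow_const q).aemeasurable aemeasurable_const
  simp only [Pi.mul_apply, mul_one, ENNReal.one_rpow, one_div_one_div] at h
  calc ∫⁻ x in s, ρ x ^ q ∂μ
      ≤ (∫⁻ x in s, (ρ x ^ q) ^ (1/q) ∂μ) ^ q * (∫⁻ _ in s, (1:ℝ≥0∞) ∂μ) ^ (1-q) := h
    _ = (∫⁻ x in s, ρ x ∂μ) ^ q * μ s ^ (1 - q) := by
        congr 2
        · refine lintegral_congr fun x => ?_
          rw [← ENNReal.rpow_mul, mul_one_div, div_self hq0.ne', ENNReal.rpow_one]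
        · rw [lintegral_one, Measure.restrict_apply_univ]

lemma rev_holder {α : Type*} [MeasurableSpace α] (μ : Measure α) {ρ : α → ℝ≥0∞}
    (hρ : Measurable ρ) {q : ℝ} (hq0 : 0 < q) (hq1 : q < 1) {s : Set α} {V : ℝ≥0∞}
    (hV0 : V ≠ 0) (hVt : V ≠ ⊤) (hs : μ s ≤ V) :
    (∫⁻ x in s, ρ x ^ q ∂μ) ^ (1/q) * V ^ (-((1-q)/q)) ≤ ∫⁻ x in s, ρ x ∂μ := by
  have hq1' : (0:ℝ) < 1 - q := by linarith
  have h2 : ∫⁻ x in s, ρ x ^ q ∂μ ≤ (∫⁻ x in s, ρ x ∂μ) ^ q * V ^ (1-q) :=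
    (holder_set μ hρ hq0 hq1 s).trans
      (mul_le_mul_right (ENNReal.rpow_le_rpow hs hq1'.le) _)
  have h3 : (∫⁻ x in s, ρ x ^ q ∂μ) ^ (1/q) ≤ (∫⁻ x in s, ρ x ∂μ) * V ^ ((1-q)/q) := by
    have h4 := ENNReal.rpow_le_rpow h2 (by positivity : (0:ℝ) ≤ 1/q)
    rwa [ENNReal.mul_rpow_of_nonneg _ _ (by positivity : (0:ℝ) ≤ 1/q),
      ← ENNReal.rpow_mul, ← ENNReal.rpow_mul, mul_one_div, div_self hq0.ne',
      ENNReal.rpow_one, mul_one_div] at h4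
  have hVp0 : V ^ ((1-q)/q) ≠ 0 := by
    simp [ENNReal.rpow_eq_zero_iff, hV0, hVt]
  have hVpt : V ^ ((1-q)/q) ≠ ⊤ := by
    simp [ENNReal.rpow_eq_top_iff, hV0, hVt]
  rw [ENNReal.rpow_neg, ← div_eq_mul_inv, ENNReal.div_le_iff hVp0 hVpt]
  exact h3

lemma disc {q θ : ℝ} (hq0 : 0 < q) (hq1 : q < 1) (hθ : 0 < θ) (a : ℕ → ℝ≥0∞)
    (hfin : (∑' k, a k) ≠ ⊤) :
    ((1 - (2:ℝ≥0∞) ^ (-(θ*q)))/2) ^ (1/q) * (∑' k, a k) ^ (1/q)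
      ≤ ∑' k : ℕ, (2:ℝ≥0∞) ^ ((k:ℝ)*θ) * a k ^ (1/q) := by
  set S := ∑' k, a k with hS
  by_cases hS0 : S = 0
  · rw [hS0, ENNReal.zero_rpow_of_pos (by positivity), mul_zero]; exact zero_le
  have hδ : 0 < θ * q := mul_pos hθ hq0
  have h2lt : (2:ℝ≥0∞) ^ (-(θ*q)) < 1 := by
    rw [ENNReal.rpow_neg, ENNReal.inv_lt_one]
    exact ENNReal.one_lt_rpow one_lt_two hδ
  have hsub0 : (1 - (2:ℝ≥0∞)^(-(θ*q))) ≠ 0 := (tsub_pos_iff_lt.mpr h2lt).ne'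
  have hsubt : (1 - (2:ℝ≥0∞)^(-(θ*q))) ≠ ⊤ :=
    (tsub_le_self.trans_lt (by norm_num : (1:ℝ≥0∞) < ⊤)).ne
  set c : ℝ≥0∞ := (1 - (2:ℝ≥0∞) ^ (-(θ*q)))/2 with hc
  obtain ⟨k, hk⟩ : ∃ k : ℕ, c * (2:ℝ≥0∞) ^ (-((k:ℝ)*(θ*q))) * S ≤ a k := by
    by_contra hcon
    push_neg at hcon
    have hgeo : (∑' n : ℕ, (2:ℝ≥0∞) ^ (-((n:ℝ)*(θ*q)))) = (1 - (2:ℝ≥0∞)^(-(θ*q)))⁻¹ := by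
      rw [← ENNReal.tsum_geometric ((2:ℝ≥0∞)^(-(θ*q)))]
      refine tsum_congr fun n => ?_
      rw [← ENNReal.rpow_natCast ((2:ℝ≥0∞)^(-(θ*q))) n, ← ENNReal.rpow_mul]
      congr 1; ring
    have hsum : S ≤ c * ((1 - (2:ℝ≥0∞)^(-(θ*q)))⁻¹ * S) := by
      calc S = ∑' n, a n := hS
        _ ≤ ∑' n : ℕ, c * ((2:ℝ≥0∞) ^ (-((n:ℝ)*(θ*q))) * S) :=
            ENNReal.tsum_le_tsum fun n => by rw [← mul_assoc]; exact (hcon n).le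
        _ = c * ((∑' n : ℕ, (2:ℝ≥0∞) ^ (-((n:ℝ)*(θ*q)))) * S) := by
            rw [ENNReal.tsum_mul_left, ENNReal.tsum_mul_right]
        _ = _ := by rw [hgeo]
    have heq : c * ((1 - (2:ℝ≥0∞)^(-(θ*q)))⁻¹ * S) = S / 2 := by
      rw [hc, div_eq_mul_inv]
      calc (1 - (2:ℝ≥0∞)^(-(θ*q))) * 2⁻¹ * ((1 - (2:ℝ≥0∞)^(-(θ*q)))⁻¹ * S)
          = ((1 - (2:ℝ≥0∞)^(-(θ*q))) * (1 - (2:ℝ≥0∞)^(-(θ*q)))⁻¹) * (S * 2⁻¹) := by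
            ring
        _ = S / 2 := by
            rw [ENNReal.mul_inv_cancel hsub0 hsubt, one_mul, div_eq_mul_inv]
    rw [heq] at hsum
    exact absurd hsum (ENNReal.half_lt_self hS0 hfin).not_ge
  refine le_trans ?_ (ENNReal.le_tsum k)
  have hak : (c * (2:ℝ≥0∞) ^ (-((k:ℝ)*(θ*q))) * S) ^ (1/q) ≤ a k ^ (1/q) :=
    ENNReal.rpow_le_rpow hk (by positivity)
  refine le_trans (le_of_eq ?_) (mul_le_mul_right hak _)
  rw [ENNReal.mul_rpow_of_nonneg _ _ (by positivity : (0:ℝ) ≤ 1/q),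
     ENNReal.mul_rpow_of_nonneg _ _ (by positivity : (0:ℝ) ≤ 1/q),
     ← ENNReal.rpow_mul]
  have hexp : -((k:ℝ)*(θ*q)) * (1/q) = -((k:ℝ)*θ) := by field_simp
  rw [hexp]
  have hone : (2:ℝ≥0∞)^((k:ℝ)*θ) * (2:ℝ≥0∞)^(-((k:ℝ)*θ)) = 1 := by
    rw [← ENNReal.rpow_add _ _ (by norm_num) (by norm_num)]; simp
  calc c ^ (1/q) * S ^ (1/q)
      = ((2:ℝ≥0∞)^((k:ℝ)*θ) * (2:ℝ≥0∞)^(-((k:ℝ)*θ))) * (c ^ (1/q) * S ^ (1/q)) := by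
        rw [hone, one_mul]
    _ = (2:ℝ≥0∞)^((k:ℝ)*θ) * (c ^ (1/q) * (2:ℝ≥0∞)^(-((k:ℝ)*θ)) * S ^ (1/q)) := by
        ring

lemma coef_id (k N : ℕ) (r w l β θ : ℝ) (hr : 0 < r) (hw : 0 < w) (hθeq : θ = l - N*β) :
    (w ^ (-β) * (2:ℝ) ^ (-((N:ℝ)*β)) * r ^ θ) * (2:ℝ) ^ ((k:ℝ)*θ)
      = ((2:ℝ)^k*r)^l * (((2:ℝ)^(k+1)*r)^(N:ℕ) * w) ^ (-β) := by
  have h1 : (0:ℝ) < (2:ℝ)^k*r := by positivity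
  have h2 : (0:ℝ) < ((2:ℝ)^(k+1)*r)^(N:ℕ) * w := by positivity
  have hL : (0:ℝ) < (w ^ (-β) * (2:ℝ) ^ (-((N:ℝ)*β)) * r ^ θ) * (2:ℝ) ^ ((k:ℝ)*θ) := by positivity
  have hR : (0:ℝ) < ((2:ℝ)^k*r)^l * (((2:ℝ)^(k+1)*r)^(N:ℕ) * w) ^ (-β) := by positivity
  rw [← Real.exp_log hL, ← Real.exp_log hR]
  congr 1
  have eL : Real.log ((w ^ (-β) * (2:ℝ) ^ (-((N:ℝ)*β)) * r ^ θ) * (2:ℝ) ^ ((k:ℝ)*θ))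
      = (-β)*Real.log w + (-((N:ℝ)*β))*Real.log 2 + θ*Real.log r + ((k:ℝ)*θ)*Real.log 2 := by
    rw [Real.log_mul (by positivity) (by positivity),
        Real.log_mul (by positivity) (by positivity),
        Real.log_mul (by positivity) (by positivity),
        Real.log_rpow hw, Real.log_rpow two_pos, Real.log_rpow hr, Real.log_rpow two_pos]
  have e3 : Real.log (((2:ℝ)^(k+1)*r)^(N:ℕ))
      = (N:ℝ)*((((k:ℝ)+1))*Real.log 2 + Real.log r) := by
    rw [Real.log_pow, Real.log_mul (by positivity) hr.ne', Real.log_pow]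
    push_cast
    ring
  have e4 : Real.log ((2:ℝ)^k*r) = (k:ℝ)*Real.log 2 + Real.log r := by
    rw [Real.log_mul (by positivity) hr.ne', Real.log_pow]
  have eR : Real.log (((2:ℝ)^k*r)^l * (((2:ℝ)^(k+1)*r)^(N:ℕ) * w) ^ (-β))
      = l*((k:ℝ)*Real.log 2 + Real.log r)
        + (-β)*((N:ℝ)*((((k:ℝ)+1))*Real.log 2 + Real.log r) + Real.log w) := by
    rw [Real.log_mul (by positivity) (by positivity),
        Real.log_rpow h1, Real.log_rpow h2,
        Real.log_mul (by positivity) hw.ne', e3, e4]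
  rw [eL, eR, hθeq]
  ring

lemma keybound (N : ℕ) (hN : 1 ≤ N) (l q β θ w : ℝ) (hl : 0 < l) (hq0 : 0 < q) (hq1 : q < 1)
    (hβd : β = (1-q)/q) (hθd : θ = l - (N:ℝ)*β) (hθpos : 0 < θ)
    (hw : 0 < w)
    (hωw : volume (ball (0:EuclideanSpace ℝ (Fin N)) 1) = ENNReal.ofReal w)
    (ρ : EuclideanSpace ℝ (Fin N) → ℝ≥0∞) (hρ : Measurable ρ)
    (hJt : (∫⁻ y, ρ y ^ q) ≠ ⊤)
    (x : EuclideanSpace ℝ (Fin N)) (r : ℝ) (hr : 0 < r)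
    (hball : ∫⁻ y in ball x r, ρ y ^ q ≤ (∫⁻ y, ρ y ^ q) / 2) :
    ((1 - (2:ℝ≥0∞) ^ (-(θ*q)))/2) ^ (1/q) *
      ENNReal.ofReal (w ^ (-β) * (2:ℝ) ^ (-((N:ℝ)*β)) * r ^ θ) *
      ((∫⁻ y, ρ y ^ q) / 2) ^ (1/q)
      ≤ ∫⁻ y, ENNReal.ofReal (‖x - y‖ ^ l) * ρ y := by
  haveI : Nonempty (Fin N) := ⟨⟨0, hN⟩⟩
  have hβ : 0 < β := by rw [hβd]; exact div_pos (by linarith) hq0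
  set J := ∫⁻ y, ρ y ^ q with hJdef
  set g : EuclideanSpace ℝ (Fin N) → ℝ≥0∞ := fun y => ENNReal.ofReal (‖x - y‖ ^ l) * ρ y
    with hgdef
  -- annuli
  set A : ℕ → Set (EuclideanSpace ℝ (Fin N)) :=
    fun k => ball x (2^(k+1)*r) \ ball x (2^k*r) with hAdef
  have hAm : ∀ k, MeasurableSet (A k) := fun k => measurableSet_ball.diff measurableSet_ball
  have hAd : Pairwise (Function.onFun Disjoint A) := by
    intro i j hij
    wlog hlt : i < j generalizing i j
    · exact (this hij.symm (by omega)).symm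
    refine Set.disjoint_left.mpr fun y hyi hyj => ?_
    have h1 : dist y x < 2^(i+1)*r := hyi.1
    have h2 : ¬ dist y x < 2^j * r := hyj.2
    apply h2
    have h3 : (2:ℝ)^(i+1) ≤ 2^j := pow_le_pow_right₀ one_le_two (by omega)
    nlinarith
  set a : ℕ → ℝ≥0∞ := fun k => ∫⁻ y in A k, ρ y ^ q with hadef
  -- covering
  have hcover : (ball x r)ᶜ ⊆ ⋃ k, A k := by
    intro y hy
    have hd : r ≤ dist y x := by simpa [mem_ball, not_lt] using hy
    obtain ⟨n, hn⟩ := pow_unbounded_of_one_lt (dist y x / r) one_lt_two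
    have hP : dist y x < 2^(n+1) * r := by
      rw [div_lt_iff₀ hr] at hn
      have h3 : (2:ℝ)^n ≤ 2^(n+1) := pow_le_pow_right₀ one_le_two (by omega)
      nlinarith
    have hEx : ∃ k, dist y x < 2^(k+1) * r := ⟨n, hP⟩
    have hk1 : dist y x < 2^(Nat.find hEx + 1) * r := Nat.find_spec hEx
    have hk2 : 2^(Nat.find hEx) * r ≤ dist y x := by
      rcases Nat.eq_zero_or_pos (Nat.find hEx) with h0 | hpos
      · rw [h0]; simpa using hd
      · have hmin := Nat.find_min hEx (m := Nat.find hEx - 1) (by omega)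
        push_neg at hmin
        have hk1eq : Nat.find hEx - 1 + 1 = Nat.find hEx := by omega
        rwa [hk1eq] at hmin
    exact Set.mem_iUnion.mpr ⟨Nat.find hEx,
      ⟨mem_ball.mpr hk1, fun h => absurd (mem_ball.mp h) (not_lt.mpr hk2)⟩⟩
  -- tail mass
  have hJ2t : J/2 ≠ ⊤ := (ENNReal.div_lt_top hJt (by norm_num)).ne
  have hSge : J/2 ≤ ∑' k, a k := by
    have h1 : ∫⁻ y in (ball x r)ᶜ, ρ y ^ q ≤ ∑' k, a k := by
      calc ∫⁻ y in (ball x r)ᶜ, ρ y ^ q ≤ ∫⁻ y in ⋃ k, A k, ρ y ^ q :=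
            lintegral_mono_set hcover
        _ = ∑' k, a k := lintegral_iUnion hAm hAd _
    have h2 : (∫⁻ y in ball x r, ρ y ^ q) + ∫⁻ y in (ball x r)ᶜ, ρ y ^ q = J :=
      lintegral_add_compl (fun y => ρ y ^ q) measurableSet_ball
    have h3 : J ≤ J/2 + ∑' k, a k :=
      calc J = (∫⁻ y in ball x r, ρ y ^ q) + ∫⁻ y in (ball x r)ᶜ, ρ y ^ q := h2.symm
        _ ≤ J/2 + ∑' k, a k := add_le_add hball h1
    have h4 : J/2 + J/2 ≤ J/2 + ∑' k, a k := by
      rw [ENNReal.add_halves]; exact h3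
    exact (ENNReal.add_le_add_iff_left hJ2t).mp h4
  have hSfin : (∑' k, a k) ≠ ⊤ := by
    have hle : (∑' k, a k) ≤ J :=
      le_trans (le_of_eq (lintegral_iUnion hAm hAd _).symm) (setLIntegral_le_lintegral _ _)
    exact (hle.trans_lt (lt_top_iff_ne_top.mpr hJt)).ne
  -- volume of balls
  have hVk : ∀ s : ℝ, 0 < s → volume (ball x s) = ENNReal.ofReal (s^(N:ℕ) * w) := by
    intro s hs
    rw [Measure.addHaar_ball volume x hs.le, hωw,
      ← ENNReal.ofReal_mul (by positivity)]
    congr 2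
    rw [finrank_euclideanSpace_fin]
  -- per annulus bound
  have hannulus : ∀ k : ℕ,
      ENNReal.ofReal (w ^ (-β) * (2:ℝ) ^ (-((N:ℝ)*β)) * r ^ θ)
        * ((2:ℝ≥0∞) ^ ((k:ℝ)*θ) * a k ^ (1/q))
        ≤ ∫⁻ y in A k, g y := by
    intro k
    have hker : ∀ y ∈ A k, ENNReal.ofReal (((2:ℝ)^k*r)^l) * ρ y ≤ g y := by
      intro y hy
      have hdy : (2:ℝ)^k * r ≤ ‖x - y‖ := by
        have h5 := hy.2
        rw [mem_ball, not_lt] at h5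
        calc (2:ℝ)^k*r ≤ dist y x := h5
          _ = ‖x - y‖ := by rw [dist_eq_norm, norm_sub_rev]
      exact mul_le_mul_left (ENNReal.ofReal_le_ofReal
        (Real.rpow_le_rpow (by positivity) hdy hl.le)) _
    have h1 : ENNReal.ofReal (((2:ℝ)^k*r)^l) * ∫⁻ y in A k, ρ y ≤ ∫⁻ y in A k, g y := by
      rw [← lintegral_const_mul _ hρ]
      exact setLIntegral_mono' (hAm k) hker
    have hV0 : ENNReal.ofReal (((2:ℝ)^(k+1)*r)^(N:ℕ) * w) ≠ 0 := by
      rw [Ne, ENNReal.ofReal_eq_zero, not_le]; positivity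
    have hVt : ENNReal.ofReal (((2:ℝ)^(k+1)*r)^(N:ℕ) * w) ≠ ⊤ := ENNReal.ofReal_ne_top
    have hμA : volume (A k) ≤ ENNReal.ofReal (((2:ℝ)^(k+1)*r)^(N:ℕ) * w) := by
      rw [← hVk _ (by positivity)]
      exact measure_mono Set.diff_subset
    have h2 := rev_holder volume hρ hq0 hq1 hV0 hVt hμA
    have h3 : ENNReal.ofReal (((2:ℝ)^k*r)^l)
        * (a k ^ (1/q) * (ENNReal.ofReal (((2:ℝ)^(k+1)*r)^(N:ℕ) * w)) ^ (-β))
        ≤ ∫⁻ y in A k, g y := by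
      refine le_trans (mul_le_mul_right ?_ _) h1
      rw [hβd]
      exact h2
    refine le_trans (le_of_eq ?_) h3
    have hVpow : (ENNReal.ofReal (((2:ℝ)^(k+1)*r)^(N:ℕ) * w)) ^ (-β)
        = ENNReal.ofReal ((((2:ℝ)^(k+1)*r)^(N:ℕ) * w) ^ (-β)) :=
      ENNReal.ofReal_rpow_of_pos (by positivity)
    have h2k : ((2:ℝ≥0∞) ^ ((k:ℝ)*θ)) = ENNReal.ofReal ((2:ℝ) ^ ((k:ℝ)*θ)) := by
      rw [← ENNReal.ofReal_ofNat, ENNReal.ofReal_rpow_of_pos two_pos]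
    rw [hVpow, h2k]
    calc ENNReal.ofReal (w ^ (-β) * (2:ℝ) ^ (-((N:ℝ)*β)) * r ^ θ)
            * (ENNReal.ofReal ((2:ℝ)^((k:ℝ)*θ)) * a k ^ (1/q))
        = ENNReal.ofReal ((w ^ (-β) * (2:ℝ) ^ (-((N:ℝ)*β)) * r ^ θ) * (2:ℝ)^((k:ℝ)*θ))
            * a k ^ (1/q) := by
          have hsplit : ENNReal.ofReal ((w ^ (-β) * (2:ℝ) ^ (-((N:ℝ)*β)) * r ^ θ) * (2:ℝ)^((k:ℝ)*θ))
              = ENNReal.ofReal (w ^ (-β) * (2:ℝ) ^ (-((N:ℝ)*β)) * r ^ θ)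
                * ENNReal.ofReal ((2:ℝ)^((k:ℝ)*θ)) := ENNReal.ofReal_mul (by positivity)
          rw [hsplit]; ring
      _ = ENNReal.ofReal (((2:ℝ)^k*r)^l * (((2:ℝ)^(k+1)*r)^(N:ℕ) * w) ^ (-β))
            * a k ^ (1/q) := by rw [coef_id k N r w l β θ hr hw hθd]
      _ = ENNReal.ofReal (((2:ℝ)^k*r)^l)
            * (a k ^ (1/q) * ENNReal.ofReal ((((2:ℝ)^(k+1)*r)^(N:ℕ) * w) ^ (-β))) := by
          rw [ENNReal.ofReal_mul (by positivity)]; ring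
  -- assemble
  have hmono : (J/2)^(1/q) ≤ (∑' k, a k)^(1/q) :=
    ENNReal.rpow_le_rpow hSge (by positivity)
  calc ((1 - (2:ℝ≥0∞) ^ (-(θ*q)))/2) ^ (1/q)
        * ENNReal.ofReal (w ^ (-β) * (2:ℝ) ^ (-((N:ℝ)*β)) * r ^ θ) * (J/2) ^ (1/q)
      = ENNReal.ofReal (w ^ (-β) * (2:ℝ) ^ (-((N:ℝ)*β)) * r ^ θ)
          * (((1 - (2:ℝ≥0∞) ^ (-(θ*q)))/2) ^ (1/q) * (J/2) ^ (1/q)) := by ring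
    _ ≤ ENNReal.ofReal (w ^ (-β) * (2:ℝ) ^ (-((N:ℝ)*β)) * r ^ θ)
          * (((1 - (2:ℝ≥0∞) ^ (-(θ*q)))/2) ^ (1/q) * (∑' k, a k) ^ (1/q)) :=
        mul_le_mul_right (mul_le_mul_right hmono _) _
    _ ≤ ENNReal.ofReal (w ^ (-β) * (2:ℝ) ^ (-((N:ℝ)*β)) * r ^ θ)
          * (∑' k : ℕ, (2:ℝ≥0∞) ^ ((k:ℝ)*θ) * a k ^ (1/q)) :=
        mul_le_mul_right (disc hq0 hq1 hθpos a hSfin) _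
    _ = ∑' k : ℕ, ENNReal.ofReal (w ^ (-β) * (2:ℝ) ^ (-((N:ℝ)*β)) * r ^ θ)
          * ((2:ℝ≥0∞) ^ ((k:ℝ)*θ) * a k ^ (1/q)) := ENNReal.tsum_mul_left.symm
    _ ≤ ∑' k : ℕ, ∫⁻ y in A k, g y := ENNReal.tsum_le_tsum hannulus
    _ = ∫⁻ y in ⋃ k, A k, g y := (lintegral_iUnion hAm hAd g).symm
    _ ≤ ∫⁻ y, g y := setLIntegral_le_lintegral _ _
set_option maxHeartbeats 1000000 in
theorem stmt_9 (N : ℕ) (hN : 1 ≤ N) (l q : ℝ) (hl : 0 < l)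
    (hq1 : q < 1) (hq0 : (N : ℝ) / (N + l) < q) :
    ∃ C : ℝ, 0 < C ∧ ∀ ρ : EuclideanSpace ℝ (Fin N) → ENNReal, Measurable ρ →
      (∫⁻ x, ρ x) < ⊤ → (∫⁻ x, ρ x ^ q) < ⊤ →
      ENNReal.ofReal C *
          (∫⁻ x, ρ x) ^ ((2 * N - q * (2 * N + l)) / ((N : ℝ) * (1 - q))) *
          (∫⁻ x, ρ x ^ q) ^ ((2 - (2 * N - q * (2 * N + l)) / ((N : ℝ) * (1 - q))) / q)
        ≤ ∫⁻ x, ∫⁻ y, ENNReal.ofReal (‖x - y‖ ^ l) * ρ x * ρ y := by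
  haveI : Nonempty (Fin N) := ⟨⟨0, hN⟩⟩
  have hN0 : (0:ℝ) < (N:ℝ) := by
    have : 0 < N := hN
    exact_mod_cast this
  have hNne : (N:ℝ) ≠ 0 := hN0.ne'
  have hNl : (0:ℝ) < (N:ℝ) + l := by linarith
  have hq0' : (0:ℝ) < q := lt_trans (by positivity) hq0
  have h1q : (0:ℝ) < 1 - q := by linarith
  have hql : (N:ℝ) < q * ((N:ℝ) + l) := by rwa [div_lt_iff₀ hNl] at hq0
  have hNq : (N:ℝ)*(1-q) < l*q := by nlinarith
  have hβpos : 0 < (1-q)/q := div_pos h1q hq0'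
  have hθpos0 : 0 < l - (N:ℝ)*((1-q)/q) := by
    have h3 : (N:ℝ)*((1-q)/q) < l := by
      rw [← mul_div_assoc, div_lt_iff₀ hq0']; exact hNq
    linarith
  set β : ℝ := (1-q)/q with hβdef
  set θ : ℝ := l - (N:ℝ)*β with hθdef
  have hθpos : 0 < θ := hθpos0
  set t : ℝ := θ/((N:ℝ)*(1-q)) with htdef
  -- geometry
  have hωt : volume (ball (0:EuclideanSpace ℝ (Fin N)) 1) ≠ ⊤ := measure_ball_lt_top.ne
  have hω0 : volume (ball (0:EuclideanSpace ℝ (Fin N)) 1) ≠ 0 :=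
    (measure_ball_pos volume _ one_pos).ne'
  set w : ℝ := (volume (ball (0:EuclideanSpace ℝ (Fin N)) 1)).toReal with hwdef
  have hw : 0 < w := ENNReal.toReal_pos hω0 hωt
  have hωw : volume (ball (0:EuclideanSpace ℝ (Fin N)) 1) = ENNReal.ofReal w :=
    (ENNReal.ofReal_toReal hωt).symm
  -- epsilon
  have h2q : (2:ℝ)^(-(θ*q)) < 1 :=
    Real.rpow_lt_one_of_one_lt_of_neg one_lt_two (by nlinarith)
  have h2q0 : (0:ℝ) < 1 - (2:ℝ)^(-(θ*q)) := by linarith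
  set e : ℝ := ((1 - (2:ℝ)^(-(θ*q)))/2)^(1/q) with hedef
  have he : 0 < e := by rw [hedef]; positivity
  refine ⟨e * w ^ (-(β + θ/(N:ℝ))) * 2 ^ (-((N:ℝ)*β + t + 1/q)), by positivity, ?_⟩
  set C : ℝ := e * w ^ (-(β + θ/(N:ℝ))) * 2 ^ (-((N:ℝ)*β + t + 1/q)) with hCdef
  have hC : 0 < C := by rw [hCdef]; positivity
  intro ρ hρ hMlt hJlt
  set M := ∫⁻ x, ρ x with hMdef
  set Jq := ∫⁻ x, ρ x ^ q with hJqdef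
  set Aex : ℝ := (2 * (N:ℝ) - q * (2 * (N:ℝ) + l)) / ((N:ℝ) * (1 - q)) with hAdef
  set Bex : ℝ := (2 - Aex) / q with hBdef
  have hBl : Bex = l/((N:ℝ)*(1-q)) := by
    rw [hBdef, hAdef]; field_simp; ring
  have hBpos : 0 < Bex := by rw [hBl]; positivity
  by_cases hJ0 : Jq = 0
  · rw [hJ0, ENNReal.zero_rpow_of_pos hBpos, mul_zero]; exact zero_le
  have hM0 : M ≠ 0 := by
    intro h
    apply hJ0
    have h1 : ρ =ᵐ[volume] 0 := (lintegral_eq_zero_iff hρ).mp h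
    rw [hJqdef, lintegral_eq_zero_iff (hρ.pow_const q)]
    filter_upwards [h1] with y hy
    simp only [Pi.zero_apply] at hy ⊢
    rw [hy, ENNReal.zero_rpow_of_pos hq0']
  set m : ℝ := M.toReal with hmdef
  set j : ℝ := Jq.toReal with hjdef
  have hm : 0 < m := ENNReal.toReal_pos hM0 hMlt.ne
  have hj : 0 < j := ENNReal.toReal_pos hJ0 hJlt.ne
  have hMm : M = ENNReal.ofReal m := (ENNReal.ofReal_toReal hMlt.ne).symm
  have hJj : Jq = ENNReal.ofReal j := (ENNReal.ofReal_toReal hJlt.ne).symm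
  set r : ℝ := (((j/(2*m^q))^(1/(1-q)))/w)^(1/(N:ℝ)) with hrdef
  have hr : 0 < r := by rw [hrdef]; positivity
  have hrlog : Real.log r
      = (1/(N:ℝ)) * ((1/(1-q)) * (Real.log j - (Real.log 2 + q * Real.log m)) - Real.log w) := by
    rw [hrdef, Real.log_rpow (by positivity), Real.log_div (by positivity) hw.ne',
        Real.log_rpow (by positivity), Real.log_div hj.ne' (by positivity),
        Real.log_mul (by norm_num) (by positivity), Real.log_rpow hm]
  -- volume of balls
  have hVball : ∀ (x : EuclideanSpace ℝ (Fin N)) (s : ℝ), 0 < s →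
      volume (ball x s) = ENNReal.ofReal (s^(N:ℕ) * w) := by
    intro x s hs
    rw [Measure.addHaar_ball volume x hs.le, hωw, ← ENNReal.ofReal_mul (by positivity)]
    congr 2
    rw [finrank_euclideanSpace_fin]
  -- ball mass bound
  have hballq : ∀ x, ∫⁻ y in ball x r, ρ y ^ q ≤ Jq / 2 := by
    intro x
    have h1 := holder_set volume hρ hq0' hq1 (ball x r)
    have h2 : (∫⁻ y in ball x r, ρ y) ^ q ≤ M ^ q :=
      ENNReal.rpow_le_rpow (setLIntegral_le_lintegral _ _) hq0'.le
    have h4 : ∫⁻ y in ball x r, ρ y ^ q ≤ M ^ q * volume (ball x r) ^ (1-q) :=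
      h1.trans (mul_le_mul_left h2 _)
    rw [hVball x r hr, hMm, ENNReal.ofReal_rpow_of_pos hm,
      ENNReal.ofReal_rpow_of_pos (by positivity),
      ← ENNReal.ofReal_mul (by positivity)] at h4
    have hid : m ^ q * ((r^(N:ℕ) * w)^(1-q)) = j/2 := by
      have hLp : (0:ℝ) < m ^ q * ((r^(N:ℕ) * w)^(1-q)) := by positivity
      have hRp : (0:ℝ) < j/2 := by positivity
      rw [← Real.exp_log hLp, ← Real.exp_log hRp]
      congr 1
      rw [Real.log_mul (by positivity) (by positivity), Real.log_rpow hm,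
          Real.log_rpow (by positivity), Real.log_mul (by positivity) hw.ne',
          Real.log_pow, Real.log_div hj.ne' (by norm_num), hrlog]
      field_simp
      ring
    rw [hid] at h4
    calc ∫⁻ y in ball x r, ρ y ^ q ≤ ENNReal.ofReal (j/2) := h4
      _ = Jq / 2 := by
          rw [ENNReal.ofReal_div_of_pos (by norm_num), ENNReal.ofReal_ofNat, hJj]
  -- epsilon conversion
  have hε : ENNReal.ofReal e = ((1 - (2:ℝ≥0∞) ^ (-(θ*q)))/2) ^ (1/q) := by
    rw [hedef, ← ENNReal.ofReal_rpow_of_pos (by positivity)]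
    congr 1
    rw [ENNReal.ofReal_div_of_pos (by norm_num), ENNReal.ofReal_ofNat]
    congr 1
    rw [ENNReal.ofReal_sub _ (by positivity), ENNReal.ofReal_one]
    congr 1
    have h2' : ((2:ℝ≥0∞)) ^ (-(θ*q)) = ENNReal.ofReal 2 ^ (-(θ*q)) := by
      rw [ENNReal.ofReal_ofNat]
    rw [h2', ENNReal.ofReal_rpow_of_pos two_pos]
  have hJ2 : ((Jq)/2) ^ (1/q) = ENNReal.ofReal ((j/2)^(1/q)) := by
    have hJq2 : Jq/2 = ENNReal.ofReal (j/2) := by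
      rw [hJj, ENNReal.ofReal_div_of_pos (by norm_num), ENNReal.ofReal_ofNat]
    rw [hJq2, ENNReal.ofReal_rpow_of_pos (by positivity)]
  -- pointwise kernel bound
  have hkey : ∀ x : EuclideanSpace ℝ (Fin N),
      ENNReal.ofReal (e * (w ^ (-β) * (2:ℝ) ^ (-((N:ℝ)*β)) * r ^ θ) * ((j/2)^(1/q)))
        ≤ ∫⁻ y, ENNReal.ofReal (‖x - y‖ ^ l) * ρ y := by
    intro x
    have h := keybound N hN l q β θ w hl hq0' hq1 hβdef hθdef hθpos hw hωw ρ hρ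
      hJlt.ne x r hr (hballq x)
    refine le_trans (le_of_eq ?_) h
    rw [← hε, hJ2, ← ENNReal.ofReal_mul he.le, ← ENNReal.ofReal_mul (by positivity)]
  -- inner integral rearrangement
  have hinner : ∀ x : EuclideanSpace ℝ (Fin N),
      ∫⁻ y, ENNReal.ofReal (‖x - y‖ ^ l) * ρ x * ρ y
        = ρ x * ∫⁻ y, ENNReal.ofReal (‖x - y‖ ^ l) * ρ y := by
    intro x
    have hcont : Continuous fun y : EuclideanSpace ℝ (Fin N) => ‖x - y‖ ^ l :=
      (Real.continuous_rpow_const hl.le).comp (continuous_const.sub continuous_id).norm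
    have hmeas : Measurable fun y : EuclideanSpace ℝ (Fin N) =>
        ENNReal.ofReal (‖x - y‖ ^ l) * ρ y :=
      hcont.measurable.ennreal_ofReal.mul hρ
    rw [← lintegral_const_mul (ρ x) hmeas]
    refine lintegral_congr fun y => ?_
    ring
  -- final real identity
  have hval : C * m ^ Aex * j ^ Bex
      = e * (w ^ (-β) * (2:ℝ) ^ (-((N:ℝ)*β)) * r ^ θ) * ((j/2)^(1/q)) * m := by
    have hLp : (0:ℝ) < C * m ^ Aex * j ^ Bex := by positivity
    have hRp : (0:ℝ) < e * (w ^ (-β) * (2:ℝ) ^ (-((N:ℝ)*β)) * r ^ θ) * ((j/2)^(1/q)) * m := by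
      positivity
    have L1 : Real.log (C * m ^ Aex * j ^ Bex)
        = Real.log C + Aex * Real.log m + Bex * Real.log j := by
      rw [Real.log_mul (by positivity) (by positivity), Real.log_mul hC.ne' (by positivity),
        Real.log_rpow hm, Real.log_rpow hj]
    have L2 : Real.log C = Real.log e + (-(β + θ/(N:ℝ))) * Real.log w
        + (-((N:ℝ)*β + t + 1/q)) * Real.log 2 := by
      rw [hCdef, Real.log_mul (by positivity) (by positivity),
        Real.log_mul he.ne' (by positivity), Real.log_rpow hw, Real.log_rpow two_pos]
    have L3 : Real.log (e * (w ^ (-β) * (2:ℝ) ^ (-((N:ℝ)*β)) * r ^ θ) * ((j/2)^(1/q)) * m)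
        = Real.log e + ((-β) * Real.log w + (-((N:ℝ)*β)) * Real.log 2 + θ * Real.log r)
          + (1/q)*(Real.log j - Real.log 2) + Real.log m := by
      rw [Real.log_mul (by positivity) hm.ne', Real.log_mul (by positivity) (by positivity),
          Real.log_mul he.ne' (by positivity), Real.log_mul (by positivity) (by positivity),
          Real.log_mul (by positivity) (by positivity),
          Real.log_rpow hw, Real.log_rpow two_pos, Real.log_rpow hr,
          Real.log_rpow (show (0:ℝ) < j/2 by positivity)]
      try rw [Real.log_div hj.ne' (by norm_num : (2:ℝ) ≠ 0)]
      try ring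
    have hA2 : Aex = 1 - q*θ*(1/(N:ℝ))*(1/(1-q)) := by
      rw [hAdef, hθdef, hβdef]
      field_simp
      try ring
    have hB2 : Bex = θ*(1/(N:ℝ))*(1/(1-q)) + 1/q := by
      rw [hBl, hθdef, hβdef]
      field_simp
      try ring
    have ht2 : t = θ*(1/(N:ℝ))*(1/(1-q)) := by
      rw [htdef]
      field_simp
    rw [← Real.exp_log hLp, ← Real.exp_log hRp]
    congr 1
    rw [L1, L3, L2, hrlog, hA2, hB2, ht2]
    ring
  -- conclude
  calc ENNReal.ofReal C * M ^ Aex * Jq ^ Bex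
      = ENNReal.ofReal (C * m ^ Aex * j ^ Bex) := by
        rw [hMm, hJj, ENNReal.ofReal_rpow_of_pos hm, ENNReal.ofReal_rpow_of_pos hj,
          ← ENNReal.ofReal_mul hC.le, ← ENNReal.ofReal_mul (by positivity)]
    _ = ENNReal.ofReal (e * (w ^ (-β) * (2:ℝ) ^ (-((N:ℝ)*β)) * r ^ θ) * ((j/2)^(1/q)) * m) := by
        rw [hval]
    _ = ENNReal.ofReal (e * (w ^ (-β) * (2:ℝ) ^ (-((N:ℝ)*β)) * r ^ θ) * ((j/2)^(1/q))) * M := by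
        rw [ENNReal.ofReal_mul (by positivity), hMm]
    _ = ∫⁻ x, ENNReal.ofReal (e * (w ^ (-β) * (2:ℝ) ^ (-((N:ℝ)*β)) * r ^ θ) * ((j/2)^(1/q)))
          * ρ x := by
        rw [hMdef]; exact (lintegral_const_mul _ hρ).symm
    _ ≤ ∫⁻ x, ρ x * ∫⁻ y, ENNReal.ofReal (‖x - y‖ ^ l) * ρ y :=
        lintegral_mono fun x => by rw [mul_comm]; exact mul_le_mul_right (hkey x) _
    _ = ∫⁻ x, ∫⁻ y, ENNReal.ofReal (‖x - y‖ ^ l) * ρ x * ρ y :=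
        (lintegral_congr fun x => (hinner x)).symm
end

section
/- Failure of the reverse HLS inequality for small q: if λ > 0 and 0 < q < N/(N+λ), then the infimum of I_λ[ρ] / [ (∫ρ dx)^α (∫ρ^q dx)^{(2−α)/q} ] over nonnegative ρ ∈ L¹ ∩ L^q(ℝ^N), ρ ≢ 0, equals 0, where α = (2N − q(2N+λ))/(N(1−q)). -/
set_option maxHeartbeats 2000000


open MeasureTheory Metric Filter

theorem stmt_10 (N : ℕ) (hN : 1 ≤ N) (l q : ℝ) (hl : 0 < l)
    (hq0 : 0 < q) (hq : q < (N : ℝ) / (N + l)) :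
    sInf {c : ℝ | ∃ ρ : EuclideanSpace ℝ (Fin N) → ℝ,
        (∀ x, 0 ≤ ρ x) ∧ Integrable ρ ∧ Integrable (fun x => ρ x ^ q) ∧
        Integrable (fun p : EuclideanSpace ℝ (Fin N) × EuclideanSpace ℝ (Fin N) =>
          ‖p.1 - p.2‖ ^ l * ρ p.1 * ρ p.2) ∧
        ¬ ρ =ᵐ[volume] 0 ∧
        c = (∫ p : EuclideanSpace ℝ (Fin N) × EuclideanSpace ℝ (Fin N),
              ‖p.1 - p.2‖ ^ l * ρ p.1 * ρ p.2) /
            ((∫ x, ρ x) ^ ((2 * N - q * (2 * N + l)) / ((N : ℝ) * (1 - q))) *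
              (∫ x, ρ x ^ q) ^
                ((2 - (2 * N - q * (2 * N + l)) / ((N : ℝ) * (1 - q))) / q))}
      = 0 := by
  set E := EuclideanSpace ℝ (Fin N) with hE
  have hNR : (0:ℝ) < N := by exact_mod_cast hN
  have hNl : (0:ℝ) < N + l := by linarith
  have hqNl : q * ((N:ℝ) + l) < N := (lt_div_iff₀ hNl).1 hq
  have hq1 : q < 1 := by
    by_contra h
    push_neg at h
    have h2 : 1 * ((N:ℝ) + l) ≤ q * ((N:ℝ) + l) := mul_le_mul_of_nonneg_right h hNl.le
    linarith
  set A : ℝ := (2 * N - q * (2 * N + l)) / ((N : ℝ) * (1 - q)) with hAdef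
  set Bc : ℝ := (2 - A) / q with hBdef
  set S := {c : ℝ | ∃ ρ : E → ℝ,
        (∀ x, 0 ≤ ρ x) ∧ Integrable ρ ∧ Integrable (fun x => ρ x ^ q) ∧
        Integrable (fun p : E × E => ‖p.1 - p.2‖ ^ l * ρ p.1 * ρ p.2) ∧
        ¬ ρ =ᵐ[volume] 0 ∧
        c = (∫ p : E × E, ‖p.1 - p.2‖ ^ l * ρ p.1 * ρ p.2) /
            ((∫ x, ρ x) ^ A * (∫ x, ρ x ^ q) ^ Bc)} with hSdef
  have hdenpos : 0 < (N:ℝ) * (1 - q) := mul_pos hNR (by linarith)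
  have hA1 : 1 < A := by
    rw [hAdef, lt_div_iff₀ hdenpos]; linarith
  have hA2 : A < 2 := by
    rw [hAdef, div_lt_iff₀ hdenpos]; linarith [mul_pos hq0 hl]
  have hB : 0 < Bc := div_pos (by linarith) hq0
  -- every element of S is nonnegative
  have hlb : ∀ c ∈ S, 0 ≤ c := by
    rintro c ⟨ρ, hρ0, -, -, -, -, rfl⟩
    apply div_nonneg
    · exact integral_nonneg fun p =>
        mul_nonneg (mul_nonneg (Real.rpow_nonneg (norm_nonneg _) _) (hρ0 _)) (hρ0 _)
    · exact mul_nonneg (Real.rpow_nonneg (integral_nonneg hρ0) _)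
        (Real.rpow_nonneg (integral_nonneg fun x => Real.rpow_nonneg (hρ0 x) _) _)
  -- key: elements of S get arbitrarily small
  have key : ∀ δ : ℝ, 0 < δ → ∃ c ∈ S, c ≤ δ := by
    intro δ hδ
    set v1 : ℝ := (volume (ball (0:E) 1)).toReal with hv1def
    have hv1 : 0 < v1 :=
      ENNReal.toReal_pos (measure_ball_pos _ _ one_pos).ne' measure_ball_lt_top.ne
    have h2l : (0:ℝ) < 2 ^ l := Real.rpow_pos_of_pos two_pos l
    set K : ℝ := 2 ^ l * v1 ^ 2 + 2 * (2 ^ l * v1) + 1 with hKdef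
    have hK : 0 < K := by positivity
    set C : ℝ := K / v1 ^ Bc with hCdef
    have hC : 0 < C := div_pos hK (Real.rpow_pos_of_pos hv1 _)
    -- choose M large
    have ht : Tendsto (fun M : ℝ => C * M ^ (1 - A)) atTop (nhds 0) := by
      have h := (tendsto_rpow_neg_atTop (by linarith : 0 < A - 1)).const_mul C
      rw [mul_zero] at h
      simpa [neg_sub] using h
    obtain ⟨M, hMδ, hM1⟩ := ((ht.eventually (gt_mem_nhds hδ)).and (eventually_ge_atTop 1)).exists
    have hM0 : (0:ℝ) < M := lt_of_lt_of_le one_pos hM1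
    set η : ℝ := M ^ (-(1/l)) with hηdef
    have hη0 : 0 < η := Real.rpow_pos_of_pos hM0 _
    have hη1 : η ≤ 1 :=
      Real.rpow_le_one_of_one_le_of_nonpos hM1 (neg_nonpos.2 (by positivity))
    have hηl : η ^ l = M⁻¹ := by
      rw [hηdef, ← Real.rpow_mul hM0.le,
        show -(1/l) * l = -1 by field_simp, Real.rpow_neg_one]
    set ε : ℝ := η / 2 with hεdef
    have hε0 : 0 < ε := by positivity
    have hε1 : ε ≤ 1 := by linarith
    set vε : ℝ := (volume (ball (0:E) ε)).toReal with hvεdef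
    have hvε : 0 < vε :=
      ENNReal.toReal_pos (measure_ball_pos _ _ hε0).ne' measure_ball_lt_top.ne
    set a : ℝ := M / vε with hadef
    have ha : 0 ≤ a := by positivity
    have haM : vε * a = M := by rw [hadef]; field_simp
    set u : E → ℝ := (ball (0:E) 1).indicator (fun _ => (1:ℝ)) with hudef
    set w : E → ℝ := (ball (0:E) ε).indicator (fun _ => a) with hwdef
    set ρ : E → ℝ := fun x => u x + w x with hρdef
    have hu0 : ∀ x, 0 ≤ u x := fun x => Set.indicator_nonneg (fun _ _ => zero_le_one) x
    have hw0 : ∀ x, 0 ≤ w x := fun x => Set.indicator_nonneg (fun _ _ => ha) x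
    have hu1 : ∀ x, u x ≤ 1 := by
      intro x; by_cases h : x ∈ ball (0:E) 1 <;> simp [hudef, h]
    have hwa : ∀ x, w x ≤ a := by
      intro x; by_cases h : x ∈ ball (0:E) ε <;> simp [hwdef, h, ha]
    have hρ0 : ∀ x, 0 ≤ ρ x := fun x => add_nonneg (hu0 x) (hw0 x)
    have hballε : ball (0:E) ε ⊆ ball (0:E) 1 := ball_subset_ball hε1
    have hρzero : ∀ x : E, x ∉ closedBall (0:E) 1 → ρ x = 0 := by
      intro x hx
      have h1 : x ∉ ball (0:E) 1 := fun h => hx (ball_subset_closedBall h)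
      have h2 : x ∉ ball (0:E) ε := fun h => h1 (hballε h)
      simp [hρdef, hudef, hwdef, Set.indicator_of_notMem h1, Set.indicator_of_notMem h2]
    have hum : Measurable u := measurable_const.indicator measurableSet_ball
    have hwm : Measurable w := measurable_const.indicator measurableSet_ball
    have hρm : Measurable ρ := hum.add hwm
    have hu_int : Integrable u :=
      (integrable_indicator_iff measurableSet_ball).2
        (integrableOn_const measure_ball_lt_top.ne)
    have hw_int : Integrable w :=
      (integrable_indicator_iff measurableSet_ball).2
        (integrableOn_const measure_ball_lt_top.ne)
    have hρ_int : Integrable ρ := hu_int.add hw_int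
    have hIu : ∫ x, u x = v1 := by
      rw [hudef, integral_indicator_const (1:ℝ) measurableSet_ball]; simp [hv1def, measureReal_def]
    have hIw : ∫ x, w x = M := by
      rw [hwdef, integral_indicator_const a measurableSet_ball, smul_eq_mul, measureReal_def, ← hvεdef, haM]
    have hIρ : ∫ x, ρ x = v1 + M := by
      rw [hρdef, integral_add hu_int hw_int, hIu, hIw]
    -- integrability of ρ^q
    have hρq_meas : AEStronglyMeasurable (fun x => ρ x ^ q) volume :=
      ((Real.continuous_rpow_const hq0.le).measurable.comp hρm).aestronglyMeasurable
    have hρq_bound : ∀ x, ‖ρ x ^ q‖ ≤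
        (closedBall (0:E) 1).indicator (fun _ => (1+a) ^ q) x := by
      intro x
      rw [Real.norm_of_nonneg (Real.rpow_nonneg (hρ0 x) q)]
      by_cases hx : x ∈ closedBall (0:E) 1
      · rw [Set.indicator_of_mem hx]
        exact Real.rpow_le_rpow (hρ0 x) (add_le_add (hu1 x) (hwa x)) hq0.le
      · rw [Set.indicator_of_notMem hx, hρzero x hx, Real.zero_rpow hq0.ne']
    have hρq_int : Integrable (fun x => ρ x ^ q) := by
      refine Integrable.mono' ?_ hρq_meas (ae_of_all _ hρq_bound)
      exact (integrable_indicator_iff measurableSet_closedBall).2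
        (integrableOn_const measure_closedBall_lt_top.ne)
    have hIρq : v1 ≤ ∫ x, ρ x ^ q := by
      rw [← hIu]
      refine integral_mono hu_int hρq_int fun x => ?_
      by_cases hx : x ∈ ball (0:E) 1
      · have h1 : (1:ℝ) ≤ ρ x := by
          have := hw0 x
          simp only [hρdef, hudef, Set.indicator_of_mem hx]
          linarith
        calc u x ≤ 1 := hu1 x
          _ = (1:ℝ) ^ q := (Real.one_rpow q).symm
          _ ≤ ρ x ^ q := Real.rpow_le_rpow zero_le_one h1 hq0.le
      · simp only [hudef, Set.indicator_of_notMem hx]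
        exact Real.rpow_nonneg (hρ0 x) q
    -- interaction functional
    have hF0 : ∀ p : E × E, 0 ≤ ‖p.1 - p.2‖ ^ l * ρ p.1 * ρ p.2 := fun p =>
      mul_nonneg (mul_nonneg (Real.rpow_nonneg (norm_nonneg _) _) (hρ0 _)) (hρ0 _)
    have hnormm : Measurable fun p : E × E => ‖p.1 - p.2‖ ^ l :=
      (Real.continuous_rpow_const hl.le).measurable.comp
        (continuous_fst.sub continuous_snd).norm.measurable
    have hFm : Measurable fun p : E × E => ‖p.1 - p.2‖ ^ l * ρ p.1 * ρ p.2 :=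
      (hnormm.mul (hρm.comp measurable_fst)).mul (hρm.comp measurable_snd)
    have hvol : (volume : Measure (E × E)) = (volume : Measure E).prod volume :=
      Measure.volume_eq_prod E E
    have hG_int : Integrable ((closedBall (0:E) 1 ×ˢ closedBall (0:E) 1).indicator
        (fun _ : E × E => (2:ℝ) ^ l * (1 + a) * (1 + a))) := by
      refine (integrable_indicator_iff
        (measurableSet_closedBall.prod measurableSet_closedBall)).2
        (integrableOn_const (LT.lt.ne ?_))
      rw [hvol, Measure.prod_prod]
      exact ENNReal.mul_lt_top measure_closedBall_lt_top measure_closedBall_lt_top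
    have hF_int : Integrable (fun p : E × E => ‖p.1 - p.2‖ ^ l * ρ p.1 * ρ p.2) := by
      refine hG_int.mono' hFm.aestronglyMeasurable (ae_of_all _ ?_)
      · intro p
        rw [Real.norm_of_nonneg (hF0 p)]
        by_cases h1 : p.1 ∈ closedBall (0:E) 1
        · by_cases h2 : p.2 ∈ closedBall (0:E) 1
          · rw [Set.indicator_of_mem (Set.mk_mem_prod h1 h2)]
            have hn : ‖p.1 - p.2‖ ^ l ≤ 2 ^ l := by
              refine Real.rpow_le_rpow (norm_nonneg _) ?_ hl.le
              have e1 : ‖p.1‖ ≤ 1 := mem_closedBall_zero_iff.1 h1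
              have e2 : ‖p.2‖ ≤ 1 := mem_closedBall_zero_iff.1 h2
              calc ‖p.1 - p.2‖ ≤ ‖p.1‖ + ‖p.2‖ := norm_sub_le _ _
                _ ≤ 2 := by linarith
            have hr1 : ρ p.1 ≤ 1 + a := add_le_add (hu1 _) (hwa _)
            have hr2 : ρ p.2 ≤ 1 + a := add_le_add (hu1 _) (hwa _)
            have := mul_le_mul (mul_le_mul hn hr1 (hρ0 _) h2l.le) hr2 (hρ0 _) (by positivity)
            exact this
          · rw [hρzero _ h2, mul_zero]
            exact Set.indicator_nonneg (fun _ _ => by positivity) _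
        · rw [hρzero _ h1, mul_zero, zero_mul]
          exact Set.indicator_nonneg (fun _ _ => by positivity) _
    -- ρ is not a.e. zero
    have hne : ¬ ρ =ᵐ[volume] 0 := by
      intro h
      have h0 : volume {x : E | ¬ ρ x = 0} = 0 := by
        simpa [Filter.EventuallyEq, ae_iff] using h
      have hsub : ball (0:E) 1 ⊆ {x : E | ¬ ρ x = 0} := by
        intro x hx
        have h1 : (1:ℝ) ≤ ρ x := by
          have := hw0 x
          simp only [hρdef, hudef, Set.indicator_of_mem hx]
          linarith
        simp only [Set.mem_setOf_eq]
        intro h'; rw [h'] at h1; linarith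
      exact (measure_ball_pos volume (0:E) one_pos).ne' (measure_mono_null hsub h0)
    -- bound the numerator
    have Hterm : ∀ (φ ψ : E → ℝ) (s t : Set E) (R : ℝ), (∀ x, 0 ≤ φ x) → (∀ y, 0 ≤ ψ y) →
        (∀ x, x ∉ s → φ x = 0) → (∀ y, y ∉ t → ψ y = 0) →
        (∀ x ∈ s, ∀ y ∈ t, ‖x - y‖ ^ l ≤ R) →
        ∀ x y : E, ‖x - y‖ ^ l * (φ x * ψ y) ≤ R * (φ x * ψ y) := by
      intro φ ψ s t R hφ hψ hφ0 hψ0 hR x y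
      by_cases hx : x ∈ s
      · by_cases hy : y ∈ t
        · exact mul_le_mul_of_nonneg_right (hR x hx y hy) (mul_nonneg (hφ x) (hψ y))
        · simp [hψ0 y hy]
      · simp [hφ0 x hx]
    have hu_supp : ∀ x, x ∉ ball (0:E) 1 → u x = 0 := fun x hx =>
      Set.indicator_of_notMem hx _
    have hw_supp : ∀ x, x ∉ ball (0:E) ε → w x = 0 := fun x hx =>
      Set.indicator_of_notMem hx _
    have hR2 : ∀ x ∈ ball (0:E) 1, ∀ y ∈ ball (0:E) 1, ‖x - y‖ ^ l ≤ 2 ^ l := by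
      intro x hx y hy
      refine Real.rpow_le_rpow (norm_nonneg _) ?_ hl.le
      have e1 := mem_ball_zero_iff.1 hx
      have e2 := mem_ball_zero_iff.1 hy
      calc ‖x - y‖ ≤ ‖x‖ + ‖y‖ := norm_sub_le _ _
        _ ≤ 2 := by linarith
    have hRη : ∀ x ∈ ball (0:E) ε, ∀ y ∈ ball (0:E) ε, ‖x - y‖ ^ l ≤ η ^ l := by
      intro x hx y hy
      refine Real.rpow_le_rpow (norm_nonneg _) ?_ hl.le
      have e1 := mem_ball_zero_iff.1 hx
      have e2 := mem_ball_zero_iff.1 hy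
      calc ‖x - y‖ ≤ ‖x‖ + ‖y‖ := norm_sub_le _ _
        _ ≤ η := by rw [hεdef] at e1 e2; linarith
    have hT1 := Hterm u u _ _ _ hu0 hu0 hu_supp hu_supp hR2
    have hT2 := Hterm u w (ball (0:E) 1) (ball (0:E) ε) (2 ^ l) hu0 hw0 hu_supp hw_supp
      (fun x hx y hy => hR2 x hx y (hballε hy))
    have hT3 := Hterm w u (ball (0:E) ε) (ball (0:E) 1) (2 ^ l) hw0 hu0 hw_supp hu_supp
      (fun x hx y hy => hR2 x (hballε hx) y hy)
    have hT4 := Hterm w w _ _ _ hw0 hw0 hw_supp hw_supp hRη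
    -- integrable pieces
    have huu_int : Integrable (fun p : E × E => u p.1 * u p.2) := by
      rw [hvol]; exact hu_int.mul_prod hu_int
    have huw_int : Integrable (fun p : E × E => u p.1 * w p.2) := by
      rw [hvol]; exact hu_int.mul_prod hw_int
    have hwu_int : Integrable (fun p : E × E => w p.1 * u p.2) := by
      rw [hvol]; exact hw_int.mul_prod hu_int
    have hww_int : Integrable (fun p : E × E => w p.1 * w p.2) := by
      rw [hvol]; exact hw_int.mul_prod hw_int
    have g1_int : Integrable (fun p : E × E => 2 ^ l * (u p.1 * u p.2)) :=
      huu_int.const_mul _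
    have g2_int : Integrable (fun p : E × E => 2 ^ l * (u p.1 * w p.2)) :=
      huw_int.const_mul _
    have g3_int : Integrable (fun p : E × E => 2 ^ l * (w p.1 * u p.2)) :=
      hwu_int.const_mul _
    have g4_int : Integrable (fun p : E × E => η ^ l * (w p.1 * w p.2)) :=
      hww_int.const_mul _
    have g12_int : Integrable (fun p : E × E =>
        2 ^ l * (u p.1 * u p.2) + 2 ^ l * (u p.1 * w p.2)) := g1_int.add g2_int
    have g123_int : Integrable (fun p : E × E =>
        2 ^ l * (u p.1 * u p.2) + 2 ^ l * (u p.1 * w p.2) + 2 ^ l * (w p.1 * u p.2)) :=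
      g12_int.add g3_int
    have hh_int : Integrable (fun p : E × E =>
        2 ^ l * (u p.1 * u p.2) + 2 ^ l * (u p.1 * w p.2) + 2 ^ l * (w p.1 * u p.2)
          + η ^ l * (w p.1 * w p.2)) := g123_int.add g4_int
    have hIuu : ∫ p : E × E, u p.1 * u p.2 = v1 * v1 := by
      rw [hvol, integral_prod_mul, hIu]
    have hIuw : ∫ p : E × E, u p.1 * w p.2 = v1 * M := by
      rw [hvol, integral_prod_mul, hIu, hIw]
    have hIwu : ∫ p : E × E, w p.1 * u p.2 = M * v1 := by
      rw [hvol, integral_prod_mul, hIu, hIw]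
    have hIww : ∫ p : E × E, w p.1 * w p.2 = M * M := by
      rw [hvol, integral_prod_mul, hIw]
    have hNum : (∫ p : E × E, ‖p.1 - p.2‖ ^ l * ρ p.1 * ρ p.2) ≤ K * M := by
      have step1 : (∫ p : E × E, ‖p.1 - p.2‖ ^ l * ρ p.1 * ρ p.2) ≤
          ∫ p : E × E, (2 ^ l * (u p.1 * u p.2) + 2 ^ l * (u p.1 * w p.2)
            + 2 ^ l * (w p.1 * u p.2) + η ^ l * (w p.1 * w p.2)) := by
        refine integral_mono hF_int hh_int fun p => ?_
        have expand : ‖p.1 - p.2‖ ^ l * ρ p.1 * ρ p.2 =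
            ‖p.1 - p.2‖ ^ l * (u p.1 * u p.2) + ‖p.1 - p.2‖ ^ l * (u p.1 * w p.2)
            + ‖p.1 - p.2‖ ^ l * (w p.1 * u p.2) + ‖p.1 - p.2‖ ^ l * (w p.1 * w p.2) := by
          simp only [hρdef]; ring
        rw [expand]
        exact add_le_add (add_le_add (add_le_add (hT1 p.1 p.2) (hT2 p.1 p.2)) (hT3 p.1 p.2))
          (hT4 p.1 p.2)
      have step2 : (∫ p : E × E, (2 ^ l * (u p.1 * u p.2) + 2 ^ l * (u p.1 * w p.2)
            + 2 ^ l * (w p.1 * u p.2) + η ^ l * (w p.1 * w p.2))) =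
          2 ^ l * (v1 * v1) + 2 ^ l * (v1 * M) + 2 ^ l * (M * v1) + η ^ l * (M * M) := by
        rw [integral_add g123_int g4_int, integral_add g12_int g3_int,
          integral_add g1_int g2_int,
          integral_const_mul, integral_const_mul, integral_const_mul, integral_const_mul,
          hIuu, hIuw, hIwu, hIww]
      have hηM : η ^ l * (M * M) = M := by
        rw [hηl]; field_simp
      rw [step2, hηM] at step1
      refine le_trans step1 ?_
      rw [hKdef]
      have e1 : 2 ^ l * (v1 * v1) ≤ 2 ^ l * v1 ^ 2 * M := by
        calc 2 ^ l * (v1 * v1) = 2 ^ l * v1 ^ 2 * 1 := by ring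
          _ ≤ 2 ^ l * v1 ^ 2 * M := by
              exact mul_le_mul_of_nonneg_left hM1 (by positivity)
      linarith
    -- assemble
    refine ⟨_, ⟨ρ, hρ0, hρ_int, hρq_int, hF_int, hne, rfl⟩, ?_⟩
    have hDen : M ^ A * v1 ^ Bc ≤ (∫ x, ρ x) ^ A * (∫ x, ρ x ^ q) ^ Bc := by
      rw [hIρ]
      refine mul_le_mul ?_ ?_ (Real.rpow_nonneg hv1.le _) (Real.rpow_nonneg (by linarith) _)
      · exact Real.rpow_le_rpow hM0.le (by linarith) (by linarith)
      · exact Real.rpow_le_rpow hv1.le hIρq hB.le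
    have hDpos : 0 < M ^ A * v1 ^ Bc :=
      mul_pos (Real.rpow_pos_of_pos hM0 _) (Real.rpow_pos_of_pos hv1 _)
    have hc1 : (∫ p : E × E, ‖p.1 - p.2‖ ^ l * ρ p.1 * ρ p.2) /
        ((∫ x, ρ x) ^ A * (∫ x, ρ x ^ q) ^ Bc) ≤ (K * M) / (M ^ A * v1 ^ Bc) :=
      div_le_div₀ (by positivity) hNum hDpos hDen
    have hc2 : (K * M) / (M ^ A * v1 ^ Bc) = C * M ^ (1 - A) := by
      rw [hCdef, Real.rpow_sub hM0, Real.rpow_one]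
      field_simp
    refine le_trans hc1 ?_
    rw [hc2]
    exact hMδ.le
  refine le_antisymm ?_ (Real.sInf_nonneg hlb)
  refine le_of_forall_pos_le_add fun δ hδ => ?_
  obtain ⟨c, hcS, hcδ⟩ := key δ hδ
  calc sInf S ≤ c := csInf_le ⟨0, hlb⟩ hcS
    _ ≤ 0 + δ := by linarith
end

section
/- Critical case of the reverse HLS inequality: if λ > 0 and q = N/(N+λ), then for ρ_R(x) := |x|^{−(N+λ)} 𝟙_{1≤|x|≤R}(x), R > 1, one has ∫_{ℝ^N} |x|^λ ρ_R dx = ∫_{ℝ^N} ρ_R^q dx = |𝕊^{N−1}| log R, and consequently (∫|x|^λ ρ_R dx)/(∫ρ_R^{N/(N+λ)} dx)^{(N+λ)/N} = (|𝕊^{N−1}| log R)^{−λ/N} → 0 as R → ∞. -/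
open MeasureTheory Real Filter

lemma key_integral (N : ℕ) (hN : 1 ≤ N) (R : ℝ) (hR : 1 < R) :
    (∫ x : EuclideanSpace ℝ (Fin N),
        Set.indicator {x : EuclideanSpace ℝ (Fin N) | 1 ≤ ‖x‖ ∧ ‖x‖ ≤ R}
          (fun x => ‖x‖ ^ (-(N : ℝ))) x)
      = N * (volume (Metric.ball (0 : EuclideanSpace ℝ (Fin N)) 1)).toReal * Real.log R := by
  haveI : NeZero N := ⟨by omega⟩
  haveI : Nontrivial (EuclideanSpace ℝ (Fin N)) := by
    have : Nonempty (Fin N) := ⟨⟨0, by omega⟩⟩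
    exact inferInstance
  have hdim : Module.finrank ℝ (EuclideanSpace ℝ (Fin N)) = N := finrank_euclideanSpace_fin
  have hrw : ∀ x : EuclideanSpace ℝ (Fin N),
      Set.indicator {x : EuclideanSpace ℝ (Fin N) | 1 ≤ ‖x‖ ∧ ‖x‖ ≤ R}
        (fun x => ‖x‖ ^ (-(N : ℝ))) x
      = Set.indicator (Set.Icc 1 R) (fun r : ℝ => r ^ (-(N : ℝ))) ‖x‖ := by
    intro x
    simp only [Set.indicator_apply, Set.mem_setOf_eq, Set.mem_Icc]
  simp_rw [hrw]
  rw [integral_fun_norm_addHaar volume (fun r : ℝ => Set.indicator (Set.Icc 1 R)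
    (fun r : ℝ => r ^ (-(N : ℝ))) r), hdim]
  have hinner : (∫ y in Set.Ioi (0 : ℝ),
      y ^ (N - 1) • Set.indicator (Set.Icc 1 R) (fun r : ℝ => r ^ (-(N : ℝ))) y)
      = Real.log R := by
    have h1 : ∀ y ∈ Set.Ioi (0 : ℝ),
        y ^ (N - 1) • Set.indicator (Set.Icc 1 R) (fun r : ℝ => r ^ (-(N : ℝ))) y
        = Set.indicator (Set.Icc 1 R) (fun r : ℝ => r⁻¹) y := by
      intro y hy
      by_cases h : y ∈ Set.Icc (1 : ℝ) R
      · rw [Set.indicator_of_mem h, Set.indicator_of_mem h, smul_eq_mul]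
        have hy1 : (1 : ℝ) ≤ y := h.1
        have hy0 : (0 : ℝ) < y := lt_of_lt_of_le one_pos hy1
        rw [← Real.rpow_natCast y (N - 1), ← Real.rpow_add hy0]
        have : ((N - 1 : ℕ) : ℝ) + (-(N : ℝ)) = -1 := by
          rw [Nat.cast_sub hN]
          push_cast; ring
        rw [this, Real.rpow_neg_one]
      · rw [Set.indicator_of_notMem h, Set.indicator_of_notMem h, smul_zero]
    rw [setIntegral_congr_fun measurableSet_Ioi h1]
    rw [setIntegral_indicator measurableSet_Icc]
    have hIcc : Set.Ioi (0:ℝ) ∩ Set.Icc 1 R = Set.Icc 1 R := by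
      apply Set.inter_eq_right.mpr
      intro y hy
      exact lt_of_lt_of_le one_pos hy.1
    rw [hIcc, MeasureTheory.integral_Icc_eq_integral_Ioc,
      ← intervalIntegral.integral_of_le hR.le,
      integral_inv_of_pos one_pos (lt_trans one_pos hR), div_one]
  rw [hinner, nsmul_eq_mul, smul_eq_mul, mul_assoc]
  rfl

theorem stmt_11 (N : ℕ) (hN : 1 ≤ N) (l : ℝ) (hl : 0 < l)
    (S : ℝ) (hS : S = N * (volume (Metric.ball (0 : EuclideanSpace ℝ (Fin N)) 1)).toReal)
    (ρ : ℝ → EuclideanSpace ℝ (Fin N) → ℝ)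
    (hρ : ∀ R, ρ R = Set.indicator {x : EuclideanSpace ℝ (Fin N) | 1 ≤ ‖x‖ ∧ ‖x‖ ≤ R}
      (fun x => ‖x‖ ^ (-((N : ℝ) + l)))) :
    (∀ R > (1 : ℝ),
      (∫ x, ‖x‖ ^ l * ρ R x) = S * Real.log R ∧
      (∫ x, ρ R x ^ ((N : ℝ) / (N + l))) = S * Real.log R ∧
      (∫ x, ‖x‖ ^ l * ρ R x) /
          (∫ x, ρ R x ^ ((N : ℝ) / (N + l))) ^ (((N : ℝ) + l) / N)
        = (S * Real.log R) ^ (-(l / N))) ∧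
    Tendsto (fun R => (∫ x, ‖x‖ ^ l * ρ R x) /
        (∫ x, ρ R x ^ ((N : ℝ) / (N + l))) ^ (((N : ℝ) + l) / N))
      atTop (nhds 0) := by
  haveI : NeZero N := ⟨by omega⟩
  have hN0 : (0 : ℝ) < N := by exact_mod_cast Nat.pos_of_ne_zero (by omega)
  have hNl : (0 : ℝ) < (N : ℝ) + l := by linarith
  have hS0 : 0 < S := by
    rw [hS]
    apply mul_pos hN0
    apply ENNReal.toReal_pos
    · exact (Metric.measure_ball_pos volume _ one_pos).ne'
    · exact measure_ball_lt_top.ne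
  -- the two integrands coincide with the key indicator
  have heq1 : ∀ R : ℝ, ∀ x : EuclideanSpace ℝ (Fin N),
      ‖x‖ ^ l * ρ R x = Set.indicator {x : EuclideanSpace ℝ (Fin N) | 1 ≤ ‖x‖ ∧ ‖x‖ ≤ R}
        (fun x => ‖x‖ ^ (-(N : ℝ))) x := by
    intro R x
    rw [hρ]
    by_cases h : x ∈ {x : EuclideanSpace ℝ (Fin N) | 1 ≤ ‖x‖ ∧ ‖x‖ ≤ R}
    · rw [Set.indicator_of_mem h, Set.indicator_of_mem h]
      have hx0 : (0 : ℝ) < ‖x‖ := lt_of_lt_of_le one_pos h.1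
      rw [← Real.rpow_add hx0]
      congr 1; ring
    · rw [Set.indicator_of_notMem h, Set.indicator_of_notMem h, mul_zero]
  have heq2 : ∀ R : ℝ, ∀ x : EuclideanSpace ℝ (Fin N),
      ρ R x ^ ((N : ℝ) / (N + l)) = Set.indicator {x : EuclideanSpace ℝ (Fin N) | 1 ≤ ‖x‖ ∧ ‖x‖ ≤ R}
        (fun x => ‖x‖ ^ (-(N : ℝ))) x := by
    intro R x
    rw [hρ]
    by_cases h : x ∈ {x : EuclideanSpace ℝ (Fin N) | 1 ≤ ‖x‖ ∧ ‖x‖ ≤ R}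
    · rw [Set.indicator_of_mem h, Set.indicator_of_mem h]
      have hx0 : (0 : ℝ) ≤ ‖x‖ := norm_nonneg x
      rw [← Real.rpow_mul hx0]
      congr 1
      field_simp
    · rw [Set.indicator_of_notMem h, Set.indicator_of_notMem h,
        Real.zero_rpow (by positivity)]
  have hmain : ∀ R > (1 : ℝ),
      (∫ x, ‖x‖ ^ l * ρ R x) = S * Real.log R ∧
      (∫ x, ρ R x ^ ((N : ℝ) / (N + l))) = S * Real.log R ∧
      (∫ x, ‖x‖ ^ l * ρ R x) /
          (∫ x, ρ R x ^ ((N : ℝ) / (N + l))) ^ (((N : ℝ) + l) / N)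
        = (S * Real.log R) ^ (-(l / N)) := by
    intro R hR
    have h1 : (∫ x, ‖x‖ ^ l * ρ R x) = S * Real.log R := by
      simp_rw [heq1 R]
      rw [key_integral N hN R hR, hS]
    have h2 : (∫ x, ρ R x ^ ((N : ℝ) / (N + l))) = S * Real.log R := by
      simp_rw [heq2 R]
      rw [key_integral N hN R hR, hS]
    refine ⟨h1, h2, ?_⟩
    rw [h1, h2]
    set A := S * Real.log R with hA
    have hA0 : 0 < A := mul_pos hS0 (Real.log_pos hR)
    rw [show A / A ^ (((N : ℝ) + l) / N) = A ^ (1 : ℝ) / A ^ (((N : ℝ) + l) / N) by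
      rw [Real.rpow_one], ← Real.rpow_sub hA0]
    congr 1
    field_simp
    ring
  refine ⟨hmain, ?_⟩
  have hev : (fun R => (∫ x, ‖x‖ ^ l * ρ R x) /
      (∫ x, ρ R x ^ ((N : ℝ) / (N + l))) ^ (((N : ℝ) + l) / N))
      =ᶠ[atTop] (fun R => (S * Real.log R) ^ (-(l / N))) := by
    filter_upwards [eventually_gt_atTop (1 : ℝ)] with R hR
    exact (hmain R hR).2.2
  rw [tendsto_congr' hev]
  have hlN : 0 < l / N := div_pos hl hN0
  exact (tendsto_rpow_neg_atTop hlN).comp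
    ((tendsto_log_atTop.const_mul_atTop hS0))
end

section
/- Jensen lower bound for the interaction of uniform balls: for N ≥ 2 and λ > 2, ∬_{B₁×B₁} |x−y|^λ dx dy ≥ ∬_{B₁×B₁} (|x|² + |y|²)^{λ/2} dx dy, where B₁ is the unit ball in ℝ^N. -/
open MeasureTheory Metric Set

private lemma key_ineq {l : ℝ} (hl : 2 < l) (u v : ℝ) (hu : 0 ≤ u) (hv : 0 ≤ v) :
    ((u ^ 2 + v ^ 2) / 2) ^ (l / 2) ≤ (u ^ l + v ^ l) / 2 := by
  have hp : (1 : ℝ) ≤ l / 2 := by linarith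
  have h := (convexOn_rpow hp).2 (Set.mem_Ici.2 (sq_nonneg u)) (Set.mem_Ici.2 (sq_nonneg v))
      (by norm_num : (0:ℝ) ≤ 1/2) (by norm_num : (0:ℝ) ≤ 1/2) (by norm_num)
  simp only [smul_eq_mul] at h
  have hu2 : ((u : ℝ) ^ 2) ^ (l / 2) = u ^ l := by
    rw [← Real.rpow_natCast u 2, ← Real.rpow_mul hu]
    congr 1; ring
  have hv2 : ((v : ℝ) ^ 2) ^ (l / 2) = v ^ l := by
    rw [← Real.rpow_natCast v 2, ← Real.rpow_mul hv]
    congr 1; ring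
  rw [hu2, hv2] at h
  calc ((u ^ 2 + v ^ 2) / 2) ^ (l / 2)
      = (1/2 * u ^ 2 + 1/2 * v ^ 2) ^ (l / 2) := by ring_nf
    _ ≤ 1/2 * u ^ l + 1/2 * v ^ l := h
    _ = (u ^ l + v ^ l) / 2 := by ring

theorem stmt_19 (N : ℕ) (hN : 2 ≤ N) (l : ℝ) (hl : 2 < l) :
    (∫ x in Metric.ball (0 : EuclideanSpace ℝ (Fin N)) 1,
        ∫ y in Metric.ball (0 : EuclideanSpace ℝ (Fin N)) 1,
          (‖x‖ ^ 2 + ‖y‖ ^ 2) ^ (l / 2)) ≤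
      ∫ x in Metric.ball (0 : EuclideanSpace ℝ (Fin N)) 1,
        ∫ y in Metric.ball (0 : EuclideanSpace ℝ (Fin N)) 1, ‖x - y‖ ^ l := by
  set E := EuclideanSpace ℝ (Fin N)
  set B : Set E := Metric.ball (0 : E) 1 with hB
  have hl0 : (0 : ℝ) ≤ l := by linarith
  have hl20 : (0 : ℝ) ≤ l / 2 := by linarith
  -- integrability of continuous functions on the ball
  have intOn : ∀ {f : E → ℝ}, Continuous f → IntegrableOn f B := by
    intro f hf
    exact (hf.continuousOn.integrableOn_compact (isCompact_closedBall (0:E) 1)).mono_set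
      Metric.ball_subset_closedBall
  have intOn2 : ∀ {f : E × E → ℝ}, Continuous f → IntegrableOn f (B ×ˢ B) := by
    intro f hf
    exact (hf.continuousOn.integrableOn_compact
      ((isCompact_closedBall (0:E) 1).prod (isCompact_closedBall (0:E) 1))).mono_set
      (Set.prod_mono Metric.ball_subset_closedBall Metric.ball_subset_closedBall)
  have hcont1 : Continuous fun p : E × E => ‖p.1 - p.2‖ ^ l :=
    Continuous.rpow_const (by fun_prop) (fun p => Or.inr hl0)
  have hcont3 : Continuous fun p : E × E => (‖p.1‖ ^ 2 + ‖p.2‖ ^ 2) ^ (l / 2) :=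
    Continuous.rpow_const (by fun_prop) (fun p => Or.inr hl20)
  -- symmetry of the ball under negation
  have hsym : ∀ x : E, (∫ y in B, ‖x + y‖ ^ l) = ∫ y in B, ‖x - y‖ ^ l := by
    intro x
    have hmp : MeasurePreserving (Neg.neg : E → E) volume volume :=
      Measure.measurePreserving_neg _
    have h := hmp.setIntegral_preimage_emb measurableEmbedding_neg
      (fun y => ‖x - y‖ ^ l) B
    have hpre : (Neg.neg : E → E) ⁻¹' B = B := by
      ext y; simp [hB, Metric.mem_ball]
    rw [hpre] at h
    rw [← h]
    congr 1 with y
    rw [sub_neg_eq_add]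
  -- pointwise (in x) inequality between inner integrals
  have step : ∀ x : E,
      (∫ y in B, (‖x‖ ^ 2 + ‖y‖ ^ 2) ^ (l / 2)) ≤ ∫ y in B, ‖x - y‖ ^ l := by
    intro x
    have h1 : IntegrableOn (fun y : E => ‖x - y‖ ^ l) B :=
      intOn (Continuous.rpow_const (by fun_prop) (fun _ => Or.inr hl0))
    have h2 : IntegrableOn (fun y : E => ‖x + y‖ ^ l) B :=
      intOn (Continuous.rpow_const (by fun_prop) (fun _ => Or.inr hl0))
    have h3 : IntegrableOn (fun y : E => (‖x‖ ^ 2 + ‖y‖ ^ 2) ^ (l / 2)) B :=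
      intOn (Continuous.rpow_const (by fun_prop) (fun _ => Or.inr hl20))
    calc (∫ y in B, (‖x‖ ^ 2 + ‖y‖ ^ 2) ^ (l / 2))
        ≤ ∫ y in B, (‖x - y‖ ^ l + ‖x + y‖ ^ l) / 2 := by
          refine setIntegral_mono_on h3 ((h1.add h2).div_const 2) measurableSet_ball ?_
          intro y _
          have hpar := parallelogram_law_with_norm ℝ x y
          have heq : ‖x‖ ^ 2 + ‖y‖ ^ 2 = (‖x - y‖ ^ 2 + ‖x + y‖ ^ 2) / 2 := by
            nlinarith [hpar]
          rw [heq]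
          exact key_ineq hl _ _ (norm_nonneg _) (norm_nonneg _)
      _ = ((∫ y in B, ‖x - y‖ ^ l) + ∫ y in B, ‖x + y‖ ^ l) / 2 := by
          rw [integral_div, integral_add h1 h2]
      _ = ∫ y in B, ‖x - y‖ ^ l := by rw [hsym x]; ring
  -- integrability of the outer integrals, via Fubini
  have hI1 : Integrable (fun p : E × E => ‖p.1 - p.2‖ ^ l)
      ((volume.restrict B).prod (volume.restrict B)) := by
    rw [Measure.prod_restrict]
    exact intOn2 hcont1
  have hI3 : Integrable (fun p : E × E => (‖p.1‖ ^ 2 + ‖p.2‖ ^ 2) ^ (l / 2))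
      ((volume.restrict B).prod (volume.restrict B)) := by
    rw [Measure.prod_restrict]
    exact intOn2 hcont3
  have outer1 : IntegrableOn (fun x : E => ∫ y in B, ‖x - y‖ ^ l) B :=
    hI1.integral_prod_left
  have outer3 : IntegrableOn (fun x : E => ∫ y in B, (‖x‖ ^ 2 + ‖y‖ ^ 2) ^ (l / 2)) B :=
    hI3.integral_prod_left
  exact setIntegral_mono_on outer3 outer1 measurableSet_ball (fun x _ => step x)
end
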